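/- arXiv:1512.04063 — 5 statements merged into one kernel-verified Lean document; each statement's English description precedes it below -/
import Mathlib

section
/- Let $a \in \mathbb{R}$ and let $f$ be continuous on $[a-1/2, a+1/2]$ such that $f'$ exists and is strictly increasing on $(a-1/2, a)$ and on $(a, a+1/2)$, and $\lim_{x\to a^-} f'(x) \le \lim_{x\to a^+} f'(x)$ (both limits finite). Then $f(a) < \int_{a-1/2}^{a+1/2} f(x)\,dx$. -/
theorem stmt0 (a : ℝ) (f f' : ℝ → ℝ) (L₁ L₂ : ℝ)
    (hc : ContinuousOn f (Set.Icc (a - 1/2) (a + 1/2)))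
    (hd1 : ∀ x ∈ Set.Ioo (a - 1/2) a, HasDerivAt f (f' x) x)
    (hd2 : ∀ x ∈ Set.Ioo a (a + 1/2), HasDerivAt f (f' x) x)
    (hm1 : StrictMonoOn f' (Set.Ioo (a - 1/2) a))
    (hm2 : StrictMonoOn f' (Set.Ioo a (a + 1/2)))
    (hL1 : Filter.Tendsto f' (nhdsWithin a (Set.Iio a)) (nhds L₁))
    (hL2 : Filter.Tendsto f' (nhdsWithin a (Set.Ioi a)) (nhds L₂))
    (hLe : L₁ ≤ L₂) :
    f a < ∫ x in (a - 1/2)..(a + 1/2), f x := by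
  -- bounds on f' near a
  have hR : ∀ c ∈ Set.Ioo a (a + 1/2), L₂ ≤ f' c := by
    intro c hc'
    refine le_of_tendsto hL2 ?_
    filter_upwards [Ioo_mem_nhdsGT_of_mem (Set.mem_Ico.mpr ⟨le_refl a, hc'.1⟩)] with t ht
    exact le_of_lt (hm2 ⟨ht.1, ht.2.trans hc'.2⟩ hc' ht.2)
  have hR' : ∀ c ∈ Set.Ioo a (a + 1/2), L₂ < f' c := by
    intro c hc'
    have hmid : (a + c)/2 ∈ Set.Ioo a c := ⟨by linarith [hc'.1], by linarith [hc'.1]⟩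
    have h1 : L₂ ≤ f' ((a + c)/2) := hR _ ⟨hmid.1, hmid.2.trans hc'.2⟩
    exact h1.trans_lt (hm2 ⟨hmid.1, hmid.2.trans hc'.2⟩ hc' hmid.2)
  have hLft : ∀ c ∈ Set.Ioo (a - 1/2) a, f' c ≤ L₁ := by
    intro c hc'
    refine ge_of_tendsto hL1 ?_
    filter_upwards [Ioo_mem_nhdsLT_of_mem (Set.mem_Ioc.mpr ⟨hc'.2, le_refl a⟩)] with t ht
    exact le_of_lt (hm1 hc' ⟨hc'.1.trans ht.1, ht.2⟩ ht.1)
  have hLft' : ∀ c ∈ Set.Ioo (a - 1/2) a, f' c < L₁ := by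
    intro c hc'
    have hmid : (c + a)/2 ∈ Set.Ioo c a := ⟨by linarith [hc'.2], by linarith [hc'.2]⟩
    have h1 : f' ((c + a)/2) ≤ L₁ := hLft _ ⟨hc'.1.trans hmid.1, hmid.2⟩
    exact (hm1 hc' ⟨hc'.1.trans hmid.1, hmid.2⟩ hmid.1).trans_le h1
  -- pointwise strict bound above the line
  have hgt_right : ∀ x ∈ Set.Ioo a (a + 1/2), f a + L₁ * (x - a) < f x := by
    intro x hx
    obtain ⟨c, hcmem, hceq⟩ := exists_hasDerivAt_eq_slope f f' hx.1
      (hc.mono (Set.Icc_subset_Icc (by linarith) (le_of_lt hx.2)))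
      (fun y hy => hd2 y ⟨hy.1, hy.2.trans hx.2⟩)
    have h1 : L₁ < f' c := lt_of_le_of_lt hLe (hR' c ⟨hcmem.1, hcmem.2.trans hx.2⟩)
    rw [hceq] at h1
    have hpos : 0 < x - a := by linarith [hx.1]
    have := (lt_div_iff₀ hpos).mp h1
    linarith
  have hgt_left : ∀ x ∈ Set.Ioo (a - 1/2) a, f a + L₁ * (x - a) < f x := by
    intro x hx
    obtain ⟨c, hcmem, hceq⟩ := exists_hasDerivAt_eq_slope f f' hx.2
      (hc.mono (Set.Icc_subset_Icc (le_of_lt hx.1) (by linarith)))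
      (fun y hy => hd1 y ⟨hx.1.trans hy.1, hy.2⟩)
    have h1 : f' c < L₁ := hLft' c ⟨hx.1.trans hcmem.1, hcmem.2⟩
    rw [hceq] at h1
    have hpos : 0 < a - x := by linarith [hx.2]
    have := (div_lt_iff₀ hpos).mp h1
    linarith
  -- set up g
  set g : ℝ → ℝ := fun x => f x - (f a + L₁ * (x - a)) with hg
  have hlc : Continuous (fun x : ℝ => f a + L₁ * (x - a)) := by continuity
  have hgc : ContinuousOn g (Set.Icc (a - 1/2) (a + 1/2)) := hc.sub hlc.continuousOn
  have hsub1 : Set.Icc (a - 1/2) a ⊆ Set.Icc (a - 1/2) (a + 1/2) :=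
    Set.Icc_subset_Icc le_rfl (by linarith)
  have hsub2 : Set.Icc a (a + 1/2) ⊆ Set.Icc (a - 1/2) (a + 1/2) :=
    Set.Icc_subset_Icc (by linarith) le_rfl
  have hint_g1 : IntervalIntegrable g MeasureTheory.volume (a - 1/2) a := by
    refine ContinuousOn.intervalIntegrable ?_
    rw [Set.uIcc_of_le (by linarith : a - 1/2 ≤ a)]
    exact hgc.mono hsub1
  have hint_g2 : IntervalIntegrable g MeasureTheory.volume a (a + 1/2) := by
    refine ContinuousOn.intervalIntegrable ?_
    rw [Set.uIcc_of_le (by linarith : a ≤ a + 1/2)]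
    exact hgc.mono hsub2
  have hint_g : IntervalIntegrable g MeasureTheory.volume (a - 1/2) (a + 1/2) := by
    apply ContinuousOn.intervalIntegrable
    rwa [Set.uIcc_of_le (by linarith)]
  have hint_f : IntervalIntegrable f MeasureTheory.volume (a - 1/2) (a + 1/2) := by
    apply ContinuousOn.intervalIntegrable
    rwa [Set.uIcc_of_le (by linarith)]
  have hint_l : IntervalIntegrable (fun x : ℝ => f a + L₁ * (x - a))
      MeasureTheory.volume (a - 1/2) (a + 1/2) := hlc.intervalIntegrable _ _
  -- positivity of ∫ g
  have pos1 : 0 < ∫ x in (a - 1/2)..a, g x :=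
    intervalIntegral.intervalIntegral_pos_of_pos_on hint_g1
      (fun x hx => sub_pos.mpr (hgt_left x hx)) (by linarith)
  have pos2 : 0 < ∫ x in a..(a + 1/2), g x :=
    intervalIntegral.intervalIntegral_pos_of_pos_on hint_g2
      (fun x hx => sub_pos.mpr (hgt_right x hx)) (by linarith)
  have hsum : (∫ x in (a - 1/2)..a, g x) + ∫ x in a..(a + 1/2), g x
      = ∫ x in (a - 1/2)..(a + 1/2), g x :=
    intervalIntegral.integral_add_adjacent_intervals hint_g1 hint_g2
  -- integral of the line
  have hline : (∫ x in (a - 1/2)..(a + 1/2), (f a + L₁ * (x - a))) = f a := by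
    have hF : ∀ x : ℝ, HasDerivAt (fun x => f a * x + L₁ * (x - a)^2 / 2)
        (f a + L₁ * (x - a)) x := by
      intro x
      have h1 : HasDerivAt (fun x : ℝ => f a * x) (f a) x := by
        simpa using (hasDerivAt_id x).const_mul (f a)
      have h2 : HasDerivAt (fun x : ℝ => (x - a)^2) (2 * (x - a)) x := by
        simpa using ((hasDerivAt_id x).sub_const a).fun_pow 2
      have := h1.fun_add (((h2.const_mul L₁).div_const 2))
      exact this.congr_deriv (by ring)
    rw [intervalIntegral.integral_eq_sub_of_hasDerivAt (fun x _ => hF x)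
      (hlc.intervalIntegrable _ _)]
    ring
  -- conclude
  have hsplit : (∫ x in (a - 1/2)..(a + 1/2), f x)
      = (∫ x in (a - 1/2)..(a + 1/2), g x) + ∫ x in (a - 1/2)..(a + 1/2), (f a + L₁ * (x - a)) := by
    rw [← intervalIntegral.integral_add hint_g hint_l]
    apply intervalIntegral.integral_congr
    intro x _
    simp [hg]
  rw [hsplit, hline]
  linarith [hsum, pos1, pos2]
end

section
/- For $\rho > \max\{0, -\alpha\}$, $0 < \gamma < \sigma \le 1$, one has $\int_0^{\infty} \frac{\operatorname{csch}(\rho t^{\gamma})}{e^{\alpha t^{\gamma}}} t^{\sigma-1}\,dt = \frac{2\,\Gamma(\sigma/\gamma)}{\gamma (2\rho)^{\sigma/\gamma}}\, \zeta\!\left(\frac{\sigma}{\gamma}, \frac{\alpha+\rho}{2\rho}\right)$, and this value is a positive real number. -/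
/-- The hyperbolic cosecant function. -/
noncomputable def csch (u : ℝ) : ℝ := 2 / (Real.exp u - Real.exp (-u))

/-- The Hurwitz zeta function (real, as a series), for Re s > 1, a > 0. -/
noncomputable def hurwitzZetaReal (s a : ℝ) : ℝ := ∑' k : ℕ, ((k : ℝ) + a) ^ (-s)

open Real MeasureTheory Set

lemma aux_int {c γ σ : ℝ} (hc : 0 < c) (hγ : 0 < γ) (hσ : 0 < σ) :
    IntegrableOn (fun t : ℝ => Real.exp (-(c * t ^ γ)) * t ^ (σ - 1)) (Set.Ioi 0) ∧
    ∫ t in Set.Ioi (0:ℝ), Real.exp (-(c * t ^ γ)) * t ^ (σ - 1)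
      = Real.Gamma (σ / γ) / (γ * c ^ (σ / γ)) := by
  set s := σ / γ with hs_def
  have hs : 0 < s := div_pos hσ hγ
  have hγs : γ * s = σ := mul_div_cancel₀ σ hγ.ne' ▸ rfl
  set f : ℝ → ℝ := fun y => y ^ (s - 1) * Real.exp (-(c * y)) with hf_def
  have hbase_int : IntegrableOn f (Set.Ioi 0) := by
    have h := integrableOn_rpow_mul_exp_neg_mul_rpow (s := s - 1) (p := 1) (b := c)
      (by linarith) zero_lt_one hc
    refine h.congr_fun (fun x hx => ?_) measurableSet_Ioi
    simp [hf_def, Real.rpow_one, neg_mul]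
  have hbase_val : ∫ y in Set.Ioi (0:ℝ), f y = (1 / c) ^ s * Real.Gamma s :=
    integral_rpow_mul_exp_neg_mul_Ioi hs hc
  have key : ∀ x ∈ Set.Ioi (0:ℝ),
      x ^ (γ - 1) • f (x ^ γ) = Real.exp (-(c * x ^ γ)) * x ^ (σ - 1) := by
    intro x hx
    have hx0 : (0:ℝ) < x := hx
    have h1 : (x ^ γ) ^ (s - 1) = x ^ (γ * (s - 1)) := (Real.rpow_mul hx0.le _ _).symm
    have h2 : x ^ (γ - 1) * x ^ (γ * (s - 1)) = x ^ (σ - 1) := by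
      rw [← Real.rpow_add hx0]
      congr 1
      have : γ * s = σ := hγs
      linarith [this]
    simp only [smul_eq_mul, hf_def, h1]
    rw [← mul_assoc, h2, mul_comm]
  constructor
  · have h := (integrableOn_Ioi_comp_rpow_iff' f hγ.ne').mpr hbase_int
    exact h.congr_fun key measurableSet_Ioi
  · have h := integral_comp_rpow_Ioi_of_pos (g := f) hγ
    have h2 : ∫ x in Set.Ioi (0:ℝ), (γ * x ^ (γ - 1)) • f (x ^ γ)
        = γ * ∫ x in Set.Ioi (0:ℝ), Real.exp (-(c * x ^ γ)) * x ^ (σ - 1) := by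
      rw [← integral_const_mul]
      refine setIntegral_congr_fun measurableSet_Ioi (fun x hx => ?_)
      rw [mul_smul, key x hx]; simp
    rw [h2, hbase_val] at h
    have hcpow : (0:ℝ) < c ^ s := Real.rpow_pos_of_pos hc _
    have : (1 / c) ^ s = 1 / c ^ s := by
      rw [Real.div_rpow zero_le_one hc.le, Real.one_rpow]
    rw [this] at h
    field_simp at h ⊢
    linarith [h]

lemma aux_series {α ρ : ℝ} (hρ0 : 0 < ρ) (u : ℝ) (hu : 0 < u) :
    csch (ρ * u) / Real.exp (α * u) = ∑' k : ℕ, 2 * Real.exp (-((α + ρ + 2 * ρ * k) * u)) := by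
  have hr0 : (0:ℝ) ≤ Real.exp (-(2 * ρ * u)) := (Real.exp_pos _).le
  have hr1 : Real.exp (-(2 * ρ * u)) < 1 := Real.exp_lt_one_iff.mpr (by nlinarith)
  have hterm : ∀ k : ℕ, 2 * Real.exp (-((α + ρ + 2 * ρ * k) * u))
      = 2 * Real.exp (-((α + ρ) * u)) * Real.exp (-(2 * ρ * u)) ^ k := by
    intro k
    rw [← Real.exp_nat_mul]
    conv_rhs => rw [mul_assoc, ← Real.exp_add]
    congr 1
    ring_nf
  simp_rw [hterm]
  rw [tsum_mul_left, tsum_geometric_of_lt_one hr0 hr1]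
  have h1 : Real.exp (ρ * u) - Real.exp (-(ρ * u))
      = Real.exp (ρ * u) * (1 - Real.exp (-(2 * ρ * u))) := by
    rw [mul_sub, mul_one, ← Real.exp_add]
    ring_nf
  rw [csch, h1]
  have h2 : (0:ℝ) < 1 - Real.exp (-(2 * ρ * u)) := by linarith
  rw [Real.exp_neg ((α + ρ) * u), add_mul, Real.exp_add]
  field_simp

theorem stmt2 (α ρ γ σ : ℝ) (hρ : ρ > max 0 (-α)) (hγ : 0 < γ) (hγσ : γ < σ) (hσ : σ ≤ 1) :
    (∫ t in Set.Ioi (0 : ℝ), csch (ρ * t ^ γ) / Real.exp (α * t ^ γ) * t ^ (σ - 1)) =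
      2 * Real.Gamma (σ / γ) / (γ * (2 * ρ) ^ (σ / γ)) *
        hurwitzZetaReal (σ / γ) ((α + ρ) / (2 * ρ)) ∧
    0 < 2 * Real.Gamma (σ / γ) / (γ * (2 * ρ) ^ (σ / γ)) *
        hurwitzZetaReal (σ / γ) ((α + ρ) / (2 * ρ)) := by
  have hρ0 : 0 < ρ := lt_of_le_of_lt (le_max_left _ _) hρ
  have hαρ : 0 < α + ρ := by have := lt_of_le_of_lt (le_max_right _ _) hρ; linarith
  set s := σ / γ with hs_def
  have hσ0 : 0 < σ := hγ.trans hγσ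
  have hs1 : 1 < s := (one_lt_div hγ).mpr hγσ
  have hs0 : 0 < s := by linarith
  set a := (α + ρ) / (2 * ρ) with ha_def
  have ha : 0 < a := div_pos hαρ (by linarith)
  -- the summands
  set c : ℕ → ℝ := fun k => α + ρ + 2 * ρ * k with hc_def
  have hck : ∀ k : ℕ, 0 < c k := fun k => by
    have : (0:ℝ) ≤ (k:ℝ) := Nat.cast_nonneg k
    simp only [hc_def]; nlinarith
  set F : ℕ → ℝ → ℝ := fun k t => 2 * (Real.exp (-(c k * t ^ γ)) * t ^ (σ - 1)) with hF_def
  -- value of each integral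
  set C := 2 * Real.Gamma s / (γ * (2 * ρ) ^ s) with hC_def
  have hCpos : 0 < C := by
    apply div_pos (by positivity)
    exact mul_pos hγ (Real.rpow_pos_of_pos (by linarith) _)
  have hint : ∀ k : ℕ, IntegrableOn (F k) (Set.Ioi 0) :=
    fun k => ((aux_int (hck k) hγ hσ0).1.const_mul 2)
  have hval : ∀ k : ℕ, (∫ t in Set.Ioi (0:ℝ), F k t) = C * ((k : ℝ) + a) ^ (-s) := by
    intro k
    have h1 : (∫ t in Set.Ioi (0:ℝ), F k t)
        = 2 * (Real.Gamma s / (γ * (c k) ^ s)) := by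
      rw [hF_def]
      simp only
      rw [integral_const_mul, (aux_int (hck k) hγ hσ0).2]
    have hcks : c k = 2 * ρ * ((k : ℝ) + a) := by
      rw [ha_def, mul_add, mul_div_cancel₀ _ (by positivity : (2 * ρ) ≠ 0)]
      simp only [hc_def]; ring
    have hka : (0:ℝ) < (k : ℝ) + a := by positivity
    rw [h1, hcks, Real.mul_rpow (by linarith) hka.le, Real.rpow_neg hka.le]
    rw [hC_def]
    field_simp
  -- summability
  have hsum : Summable (fun k : ℕ => ((k : ℝ) + a) ^ (-s)) := by
    have h := (Real.summable_one_div_nat_add_rpow a s).mpr hs1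
    refine h.congr fun k => ?_
    have hka : (0:ℝ) < (k : ℝ) + a := by positivity
    rw [abs_of_pos hka, Real.rpow_neg hka.le, one_div]
  have hsumI : Summable (fun k : ℕ => ∫ t in Set.Ioi (0:ℝ), F k t) := by
    simp_rw [hval]; exact hsum.mul_left C
  -- measurability
  have hmeas : ∀ k : ℕ, AEStronglyMeasurable (F k) (volume.restrict (Set.Ioi 0)) := by
    intro k
    apply Measurable.aestronglyMeasurable
    fun_prop
  -- the lintegral bound
  have hnn : ∀ k : ℕ, ∀ t ∈ Set.Ioi (0:ℝ), 0 ≤ F k t := by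
    intro k t ht
    have : (0:ℝ) < t := ht
    simp only [hF_def]
    positivity
  have hlin : ∀ k : ℕ, (∫⁻ t in Set.Ioi (0:ℝ), ‖F k t‖₊)
      = ENNReal.ofReal (∫ t in Set.Ioi (0:ℝ), F k t) := by
    intro k
    rw [MeasureTheory.ofReal_integral_eq_lintegral_ofReal (hint k)
      ((ae_restrict_iff' measurableSet_Ioi).mpr (Filter.Eventually.of_forall (hnn k)))]
    refine lintegral_congr_ae ?_
    filter_upwards [ae_restrict_mem measurableSet_Ioi] with t ht
    rw [← Real.enorm_eq_ofReal (hnn k t ht), enorm_eq_nnnorm]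
  have hlt : (∑' k : ℕ, ∫⁻ t in Set.Ioi (0:ℝ), ‖F k t‖₊) ≠ ⊤ := by
    simp_rw [hlin]
    rw [← ENNReal.ofReal_tsum_of_nonneg (fun k => by
        rw [hval k]; positivity) hsumI]
    exact ENNReal.ofReal_ne_top
  -- interchange
  have hswap : (∫ t in Set.Ioi (0:ℝ), ∑' k : ℕ, F k t)
      = ∑' k : ℕ, ∫ t in Set.Ioi (0:ℝ), F k t := integral_tsum hmeas hlt
  -- pointwise identity
  have hpt : ∀ t ∈ Set.Ioi (0:ℝ),
      csch (ρ * t ^ γ) / Real.exp (α * t ^ γ) * t ^ (σ - 1) = ∑' k : ℕ, F k t := by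
    intro t ht
    have ht0 : (0:ℝ) < t := ht
    have hu : (0:ℝ) < t ^ γ := Real.rpow_pos_of_pos ht0 γ
    rw [aux_series hρ0 _ hu, ← tsum_mul_right]
    refine tsum_congr fun k => ?_
    simp only [hF_def, hc_def]
    ring
  have hL : (∫ t in Set.Ioi (0 : ℝ), csch (ρ * t ^ γ) / Real.exp (α * t ^ γ) * t ^ (σ - 1))
      = ∑' k : ℕ, ∫ t in Set.Ioi (0:ℝ), F k t := by
    rw [← hswap]
    exact setIntegral_congr_fun measurableSet_Ioi hpt
  have hR : (∑' k : ℕ, ∫ t in Set.Ioi (0:ℝ), F k t) = C * hurwitzZetaReal s a := by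
    simp_rw [hval]
    rw [tsum_mul_left, hurwitzZetaReal]
  have hz : 0 < hurwitzZetaReal s a := by
    rw [hurwitzZetaReal]
    refine Summable.tsum_pos hsum (fun k => ?_) 0 ?_
    · have hka : (0:ℝ) < (k : ℝ) + a := by positivity
      positivity
    · have hka : (0:ℝ) < (0 : ℕ) + a := by positivity
      positivity
  exact ⟨hL.trans hR, mul_pos hCpos hz⟩
end

section
/- Let $\rho > \max\{0,-\alpha\}$, $0 < \gamma < \sigma \le 1$, let $(\nu_n)$ be a positive decreasing sequence with partial sums $V_n$, let $\beta \le \nu_1/2$, let $U : (0,\infty) \to (0,\infty)$ be given by $U(x) = \int_0^x \mu(t)\,dt$ for a positive continuous $\mu$ with $U(x) < \infty$, and let $\delta \in \{-1,1\}$. Then for every $x > 0$, the weight coefficient $\omega_{\delta}(\sigma, x) = \sum_{n=1}^{\infty} \frac{\operatorname{csch}(\rho U^{\delta\gamma}(x)(V_n-\beta)^{\gamma})}{e^{\alpha U^{\delta\gamma}(x)(V_n-\beta)^{\gamma}}} \cdot \frac{U^{\delta\sigma}(x)\,\nu_{n+1}}{(V_n-\beta)^{1-\sigma}}$ satisfies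 $\omega_{\delta}(\sigma,x) < k(\sigma)$, where $k(\sigma) = \int_0^{\infty} \frac{\operatorname{csch}(\rho u^{\gamma})}{e^{\alpha u^{\gamma}}} u^{\sigma-1}\,du$. -/
open Real MeasureTheory Set
open scoped ENNReal

namespace Stmt10Aux


/-- The basic kernel function 2/(e^{as} - e^{bs}). -/
noncomputable def Phi (a b : ℝ) : ℝ → ℝ := fun s => 2 / (Real.exp (a * s) - Real.exp (b * s))

/-- Its derivative. -/
noncomputable def PhiD (a b : ℝ) : ℝ → ℝ := fun s =>
  -(2 * (a * Real.exp (a * s) - b * Real.exp (b * s))) /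
    (Real.exp (a * s) - Real.exp (b * s)) ^ 2

lemma hasDerivAt_exp_mul (c s : ℝ) :
    HasDerivAt (fun s : ℝ => Real.exp (c * s)) (c * Real.exp (c * s)) s := by
  have h := ((hasDerivAt_id s).const_mul c).exp
  simpa [mul_comm] using h

lemma psi_pos {a b : ℝ} (hb : b < a) {s : ℝ} (hs : 0 < s) :
    0 < Real.exp (a * s) - Real.exp (b * s) := by
  have : b * s < a * s := by nlinarith
  have := Real.exp_lt_exp.mpr this
  linarith

lemma psiD_pos {a b : ℝ} (ha : 0 < a) (hb : b < a) {s : ℝ} (hs : 0 < s) :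
    0 < a * Real.exp (a * s) - b * Real.exp (b * s) := by
  have h1 : Real.exp (b * s) < Real.exp (a * s) := by
    apply Real.exp_lt_exp.mpr; nlinarith
  have h2 := Real.exp_pos (a * s)
  have h3 := Real.exp_pos (b * s)
  nlinarith

lemma phi_hasDerivAt {a b : ℝ} (hb : b < a) {s : ℝ} (hs : 0 < s) :
    HasDerivAt (Phi a b) (PhiD a b s) s := by
  have hpsi : HasDerivAt (fun s : ℝ => Real.exp (a * s) - Real.exp (b * s))
      (a * Real.exp (a * s) - b * Real.exp (b * s)) s :=
    (hasDerivAt_exp_mul a s).sub (hasDerivAt_exp_mul b s)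
  have hne := (psi_pos hb hs).ne'
  have h := (hasDerivAt_const s (2:ℝ)).div hpsi hne
  refine h.congr_deriv ?_
  unfold PhiD
  field_simp
  ring

lemma phiD_hasDerivAt_pos {a b : ℝ} (ha : 0 < a) (hb : b < a) {s : ℝ} (hs : 0 < s) :
    ∃ d, HasDerivAt (PhiD a b) d s ∧ 0 < d := by
  set X := Real.exp (a * s) with hX
  set Y := Real.exp (b * s) with hY
  have hN : HasDerivAt (fun s : ℝ => -(2 * (a * Real.exp (a * s) - b * Real.exp (b * s))))
      (-(2 * (a ^ 2 * X - b ^ 2 * Y))) s := by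
    have := (((hasDerivAt_exp_mul a s).const_mul a).sub
      ((hasDerivAt_exp_mul b s).const_mul b)).const_mul (2:ℝ)
    have h2 := this.neg
    refine h2.congr_deriv ?_
    simp only [hX, hY]; ring
  have hpsi : HasDerivAt (fun s : ℝ => Real.exp (a * s) - Real.exp (b * s))
      (a * X - b * Y) s :=
    (hasDerivAt_exp_mul a s).sub (hasDerivAt_exp_mul b s)
  have hD : HasDerivAt (fun s : ℝ => (Real.exp (a * s) - Real.exp (b * s)) ^ 2)
      (2 * (X - Y) * (a * X - b * Y)) s := by
    have := hpsi.pow 2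
    refine this.congr_deriv ?_
    simp only [hX, hY]; ring
  have hne : (X - Y) ^ 2 ≠ 0 := pow_ne_zero 2 (psi_pos hb hs).ne'
  refine ⟨_, hN.div hD (by simpa using hne), ?_⟩
  have hXY : Y < X := by
    apply Real.exp_lt_exp.mpr; nlinarith
  have hYpos : 0 < Y := Real.exp_pos _
  have hXpos : 0 < X := Real.exp_pos _
  have hnum : 0 < -(2 * (a ^ 2 * X - b ^ 2 * Y)) * (X - Y) ^ 2 -
      -(2 * (a * X - b * Y)) * (2 * (X - Y) * (a * X - b * Y)) := by
    have key : 0 < a ^ 2 * X ^ 2 + b ^ 2 * Y ^ 2 + (a ^ 2 + b ^ 2 - 4 * a * b) * (X * Y) := by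
      nlinarith [sq_nonneg (a * X - b * Y),
        mul_pos (mul_pos hXpos hYpos) (pow_pos (sub_pos.mpr hb) 2)]
    nlinarith [mul_pos (mul_pos hXpos hYpos) (sub_pos.mpr hXY), sub_pos.mpr hXY]
  have hden : 0 < ((X - Y) ^ 2) ^ 2 := by positivity
  exact div_pos hnum hden

lemma phi_continuousOn {a b : ℝ} (hb : b < a) : ContinuousOn (Phi a b) (Ioi 0) :=
  fun s hs => ((phi_hasDerivAt hb hs).continuousAt).continuousWithinAt

lemma phi_strictConvexOn {a b : ℝ} (ha : 0 < a) (hb : b < a) :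
    StrictConvexOn ℝ (Ioi 0) (Phi a b) := by
  apply strictConvexOn_of_deriv2_pos (convex_Ioi 0) (phi_continuousOn hb)
  intro x hx
  rw [interior_Ioi] at hx
  have hEq : deriv (Phi a b) =ᶠ[nhds x] PhiD a b := by
    filter_upwards [Ioi_mem_nhds hx] with y hy using (phi_hasDerivAt hb hy).deriv
  obtain ⟨d, hd, hdpos⟩ := phiD_hasDerivAt_pos ha hb hx
  have : deriv^[2] (Phi a b) x = deriv (deriv (Phi a b)) x := by
    simp [Function.iterate_succ_apply']
  rw [this, hEq.deriv_eq, hd.deriv]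
  exact hdpos

lemma phi_strictAntiOn {a b : ℝ} (ha : 0 < a) (hb : b < a) :
    StrictAntiOn (Phi a b) (Ioi 0) := by
  apply strictAntiOn_of_deriv_neg (convex_Ioi 0) (phi_continuousOn hb)
  intro x hx
  rw [interior_Ioi] at hx
  rw [(phi_hasDerivAt hb hx).deriv]
  unfold PhiD
  apply div_neg_of_neg_of_pos
  · have := psiD_pos ha hb hx
    linarith
  · exact pow_pos (psi_pos hb hx) 2

lemma phi_pos {a b : ℝ} (hb : b < a) {s : ℝ} (hs : 0 < s) : 0 < Phi a b s :=
  div_pos two_pos (psi_pos hb hs)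



lemma rpow_hasDerivAt {p : ℝ} {x : ℝ} (hx : 0 < x) :
    HasDerivAt (fun u : ℝ => u ^ p) (p * x ^ (p - 1)) x :=
  Real.hasDerivAt_rpow_const (Or.inl hx.ne')

lemma rpow_continuousOn (p : ℝ) : ContinuousOn (fun u : ℝ => u ^ p) (Ioi 0) :=
  fun x hx => ((rpow_hasDerivAt hx).continuousAt).continuousWithinAt

lemma rpow_convexOn {σ : ℝ} (hσ : σ ≤ 1) :
    ConvexOn ℝ (Ioi 0) (fun u : ℝ => u ^ (σ - 1)) := by
  have hderiv : ∀ x ∈ Ioi (0:ℝ), HasDerivAt (fun u : ℝ => u ^ (σ - 1))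
      ((σ - 1) * x ^ (σ - 2)) x := by
    intro x hx
    have h := rpow_hasDerivAt (p := σ - 1) hx
    have e : σ - 1 - 1 = σ - 2 := by ring
    rw [e] at h
    exact h
  have hEq : EqOn (deriv (fun u : ℝ => u ^ (σ - 1))) (fun u : ℝ => (σ - 1) * u ^ (σ - 2))
      (Ioi 0) := fun y hy => (hderiv y hy).deriv
  apply convexOn_of_deriv2_nonneg (convex_Ioi 0) (rpow_continuousOn _)
  · rw [interior_Ioi]
    exact fun y hy => (hderiv y hy).differentiableAt.differentiableWithinAt
  · rw [interior_Ioi]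
    refine DifferentiableOn.congr ?_ hEq
    intro y hy
    exact ((rpow_hasDerivAt hy).const_mul (σ - 1)).differentiableAt.differentiableWithinAt
  · intro y hy
    rw [interior_Ioi] at hy
    have hEq2 : deriv (fun u : ℝ => u ^ (σ - 1)) =ᶠ[nhds y]
        (fun u : ℝ => (σ - 1) * u ^ (σ - 2)) := by
      filter_upwards [Ioi_mem_nhds hy] with z hz using hEq hz
    have : deriv^[2] (fun u : ℝ => u ^ (σ - 1)) y =
        deriv (deriv (fun u : ℝ => u ^ (σ - 1))) y := by
      simp [Function.iterate_succ_apply']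
    rw [this, hEq2.deriv_eq, ((rpow_hasDerivAt hy).const_mul (σ - 1)).deriv]
    have h1 : (0:ℝ) < y ^ (σ - 2 - 1) := Real.rpow_pos_of_pos hy _
    nlinarith [mul_nonneg (mul_nonneg (by linarith : (0:ℝ) ≤ 1 - σ)
      (by linarith : (0:ℝ) ≤ 2 - σ)) h1.le]

lemma rpow_antitoneOn {σ : ℝ} (hσ : σ ≤ 1) :
    AntitoneOn (fun u : ℝ => u ^ (σ - 1)) (Ioi 0) := by
  apply antitoneOn_of_deriv_nonpos (convex_Ioi 0) (rpow_continuousOn _)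
  · rw [interior_Ioi]
    exact fun y hy => (rpow_hasDerivAt hy).differentiableAt.differentiableWithinAt
  · intro y hy
    rw [interior_Ioi] at hy
    rw [(rpow_hasDerivAt hy).deriv]
    have h1 : (0:ℝ) < y ^ (σ - 1 - 1) := Real.rpow_pos_of_pos hy _
    nlinarith

/-- Composition of a strictly convex strictly antitone function with `u ^ γ`. -/
lemma comp_strictConvexOn {Φ : ℝ → ℝ} (hconv : StrictConvexOn ℝ (Ioi 0) Φ)
    (hanti : StrictAntiOn Φ (Ioi 0)) {γ : ℝ} (hγ : 0 < γ) (hγ1 : γ < 1) :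
    StrictConvexOn ℝ (Ioi 0) (fun u : ℝ => Φ (u ^ γ)) := by
  refine ⟨convex_Ioi 0, fun x hx y hy hxy p q hp hq hpq => ?_⟩
  simp only [smul_eq_mul]
  have hx0 : (0:ℝ) < x := hx
  have hy0 : (0:ℝ) < y := hy
  have hxγ : (0:ℝ) < x ^ γ := Real.rpow_pos_of_pos hx0 γ
  have hyγ : (0:ℝ) < y ^ γ := Real.rpow_pos_of_pos hy0 γ
  have hcombγ : (0:ℝ) < p * x ^ γ + q * y ^ γ := by positivity
  have hcomb : (0:ℝ) < p * x + q * y := by positivity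
  have hconc := (Real.strictConcaveOn_rpow hγ hγ1).2 (le_of_lt hx0) (le_of_lt hy0) hxy hp hq hpq
  simp only [smul_eq_mul] at hconc
  have h1 : Φ ((p * x + q * y) ^ γ) < Φ (p * x ^ γ + q * y ^ γ) :=
    hanti hcombγ (Real.rpow_pos_of_pos hcomb γ) hconc
  have h2 : Φ (p * x ^ γ + q * y ^ γ) ≤ p * Φ (x ^ γ) + q * Φ (y ^ γ) := by
    have := hconv.convexOn.2 (mem_Ioi.mpr hxγ) (mem_Ioi.mpr hyγ) hp.le hq.le hpq
    simpa using this
  exact h1.trans_le h2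

/-- Product of positive convex functions, one strict, varying in the same direction. -/
lemma strictConvexOn_mul {s : Set ℝ} {h p : ℝ → ℝ} (hh : StrictConvexOn ℝ s h)
    (hp : ConvexOn ℝ s p) (hh0 : ∀ x ∈ s, 0 < h x) (hp0 : ∀ x ∈ s, 0 < p x)
    (hmv : ∀ x ∈ s, ∀ y ∈ s, 0 ≤ (h x - h y) * (p x - p y)) :
    StrictConvexOn ℝ s (fun u => h u * p u) := by
  refine ⟨hh.1, fun x hx y hy hxy pa pb hpa hpb hab => ?_⟩
  have hm : pa • x + pb • y ∈ s := hh.1 hx hy hpa.le hpb.le hab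
  simp only [smul_eq_mul] at hm ⊢
  have h1 := hh.2 hx hy hxy hpa hpb hab
  have h2 := hp.2 hx hy hpa.le hpb.le hab
  simp only [smul_eq_mul] at h1 h2
  have hpm : 0 < p (pa * x + pb * y) := hp0 _ hm
  have hhx := hh0 _ hx; have hhy := hh0 _ hy
  have hpx := hp0 _ hx; have hpy := hp0 _ hy
  have hApos : 0 < pa * h x + pb * h y := by positivity
  calc h (pa * x + pb * y) * p (pa * x + pb * y)
      < (pa * h x + pb * h y) * p (pa * x + pb * y) :=
        mul_lt_mul_of_pos_right h1 hpm
    _ ≤ (pa * h x + pb * h y) * (pa * p x + pb * p y) :=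
        mul_le_mul_of_nonneg_left h2 hApos.le
    _ ≤ pa * (h x * p x) + pb * (h y * p y) := by
        have hpb' : pb = 1 - pa := by linarith
        subst hpb'
        nlinarith [mul_nonneg (mul_pos hpa hpb).le (hmv x hx y hy)]

/-- Tangent line at a point of a strictly convex function on `(0, ∞)`. -/
lemma exists_tangent_line {f : ℝ → ℝ} (hf : StrictConvexOn ℝ (Ioi 0) f) {s : ℝ} (hs : 0 < s) :
    ∃ k : ℝ, (∀ u ∈ Ioi (0:ℝ), f s + k * (u - s) ≤ f u) ∧
      (∀ u ∈ Ioi (0:ℝ), u ≠ s → f s + k * (u - s) < f u) := by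
  set g : ℝ → ℝ := fun v => (f v - f s) / (v - s) with hg
  have hs2 : s / 2 ∈ Ioi (0:ℝ) := by simpa using half_pos hs
  have hs2ne : s / 2 ≠ s := by intro h; nlinarith [hs]
  have hsmem : s ∈ Ioi (0:ℝ) := hs
  have hlb : ∀ v ∈ Ioi s, g (s / 2) ≤ g v := by
    intro v hv
    have hv0 : v ∈ Ioi (0:ℝ) := lt_trans hs hv
    exact hf.convexOn.secant_mono hsmem hs2 hv0 hs2ne (ne_of_gt hv) (by linarith [mem_Ioi.mp hv])
  set R : Set ℝ := g '' Ioi s with hR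
  have hRne : R.Nonempty := ⟨g (s + 1), ⟨s + 1, by simp, rfl⟩⟩
  have hbdd : BddBelow R := ⟨g (s / 2), by rintro r ⟨v, hv, rfl⟩; exact hlb v hv⟩
  set k := sInf R with hk
  have hk_le : ∀ v ∈ Ioi s, k ≤ g v := fun v hv => csInf_le hbdd ⟨v, hv, rfl⟩
  have hle_k : ∀ u, 0 < u → u < s → g u ≤ k := by
    intro u hu hus
    apply le_csInf hRne
    rintro r ⟨v, hv, rfl⟩
    exact hf.convexOn.secant_mono hsmem (mem_Ioi.mpr hu) (lt_trans hs hv)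
      (ne_of_lt hus) (ne_of_gt hv) (le_of_lt (lt_trans hus hv))
  have main : ∀ u ∈ Ioi (0:ℝ), (f s + k * (u - s) ≤ f u) ∧
      (u ≠ s → f s + k * (u - s) < f u) := by
    intro u hu
    rcases lt_trichotomy u s with hus | rfl | hsu
    · have hmid : u < (u + s) / 2 := by linarith
      have hmid2 : (u + s) / 2 < s := by linarith
      have hmid0 : (0:ℝ) < (u + s) / 2 := by have := mem_Ioi.mp hu; linarith
      have h1 : g u < g ((u + s) / 2) :=
        hf.secant_strict_mono hsmem (mem_Ioi.mpr hu) (mem_Ioi.mpr hmid0)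
          (ne_of_lt hus) (ne_of_lt hmid2) hmid
      have h2 : g ((u + s) / 2) ≤ k := hle_k _ hmid0 hmid2
      have hgu : g u < k := lt_of_lt_of_le h1 h2
      have husne : u - s < 0 := by linarith
      have : k * (u - s) < g u * (u - s) := by
        exact mul_lt_mul_of_neg_right hgu husne
      rw [hg] at this
      rw [div_mul_cancel₀ _ (by linarith : u - s ≠ 0)] at this
      constructor
      · linarith
      · intro _; linarith
    · constructor
      · simp
      · intro h; exact absurd rfl h
    · have hmid : s < (s + u) / 2 := by linarith
      have hmid2 : (s + u) / 2 < u := by linarith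
      have hmid0 : (0:ℝ) < (s + u) / 2 := by linarith
      have h1 : g ((s + u) / 2) < g u :=
        hf.secant_strict_mono hsmem (mem_Ioi.mpr hmid0) hu
          (ne_of_gt hmid) (ne_of_gt hsu) hmid2
      have h2 : k ≤ g ((s + u) / 2) := hk_le _ (mem_Ioi.mpr hmid)
      have hgu : k < g u := lt_of_le_of_lt h2 h1
      have husne : 0 < u - s := by linarith
      have : k * (u - s) < g u * (u - s) := mul_lt_mul_of_pos_right hgu husne
      rw [hg] at this
      rw [div_mul_cancel₀ _ (by linarith : u - s ≠ 0)] at this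
      constructor
      · linarith
      · intro _; linarith
  exact ⟨k, fun u hu => (main u hu).1, fun u hu hne => (main u hu).2 hne⟩

/-- Strict midpoint Hermite–Hadamard bound on intervals `(l, r] ⊆ (0, ∞)`. -/
lemma mid_mul_lt_integral {f : ℝ → ℝ} (hf : StrictConvexOn ℝ (Ioi 0) f)
    (hint : IntegrableOn f (Ioi 0)) {l r : ℝ} (hl : 0 ≤ l) (hlr : l < r) :
    f ((l + r) / 2) * (r - l) < ∫ u in Ioc l r, f u := by
  set m := (l + r) / 2 with hm
  have hm0 : 0 < m := by rw [hm]; linarith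
  obtain ⟨k, hk_le, hk_lt⟩ := exists_tangent_line hf hm0
  have hsub : Ioc l r ⊆ Ioi 0 := fun u hu => lt_of_le_of_lt hl hu.1
  have hfi : IntegrableOn f (Ioc l r) := hint.mono_set hsub
  have hTc : Continuous (fun u : ℝ => f m + k * (u - m)) := by continuity
  have hTi : IntegrableOn (fun u : ℝ => f m + k * (u - m)) (Ioc l r) :=
    hTc.integrableOn_Ioc
  have hdi : IntegrableOn (fun u : ℝ => f u - (f m + k * (u - m))) (Ioc l r) :=
    hfi.sub hTi
  have h0 : 0 ≤ᵐ[volume.restrict (Ioc l r)] fun u : ℝ => f u - (f m + k * (u - m)) := by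
    filter_upwards [ae_restrict_mem measurableSet_Ioc] with u hu
    exact sub_nonneg.mpr (hk_le u (hsub hu))
  have hpos : 0 < ∫ u in Ioc l r, (f u - (f m + k * (u - m))) := by
    rw [setIntegral_pos_iff_support_of_nonneg_ae h0 hdi]
    have hss : Ioc l r \ {m} ⊆
        Function.support (fun u : ℝ => f u - (f m + k * (u - m))) ∩ Ioc l r := by
      rintro u ⟨hu, hum⟩
      refine ⟨?_, hu⟩
      have := hk_lt u (hsub hu) (by simpa using hum)
      exact (sub_pos.mpr this).ne'
    calc (0:ℝ≥0∞) < volume (Ioc l r \ {m}) := by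
          rw [measure_diff_null (measure_singleton m)]
          rw [Real.volume_Ioc]
          exact ENNReal.ofReal_pos.mpr (by linarith)
      _ ≤ _ := measure_mono hss
  have hT : ∫ u in Ioc l r, (f m + k * (u - m)) = f m * (r - l) := by
    rw [← intervalIntegral.integral_of_le hlr.le]
    have h1 : IntervalIntegrable (fun _ : ℝ => f m) volume l r := intervalIntegrable_const
    have h2 : IntervalIntegrable (fun u : ℝ => k * (u - m)) volume l r :=
      (by continuity : Continuous (fun u : ℝ => k * (u - m))).intervalIntegrable l r
    rw [intervalIntegral.integral_add h1 h2]
    rw [intervalIntegral.integral_const]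
    have h3 : ∫ u in l..r, k * (u - m) = k * ((r ^ 2 - l ^ 2) / 2 - m * (r - l)) := by
      rw [intervalIntegral.integral_const_mul]
      have h4 : IntervalIntegrable (fun u : ℝ => u) volume l r :=
        (continuous_id).intervalIntegrable l r
      have h5 : IntervalIntegrable (fun _ : ℝ => m) volume l r := intervalIntegrable_const
      have he : ∫ u in l..r, (u - m) = (∫ u in l..r, u) - ∫ u in l..r, (fun _ => m) u :=
        intervalIntegral.integral_sub h4 h5
      rw [he, integral_id, intervalIntegral.integral_const]
      simp only [smul_eq_mul]
      ring
    rw [h3, hm]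
    simp only [smul_eq_mul]
    ring
  have hsplit : ∫ u in Ioc l r, (f u - (f m + k * (u - m))) =
      (∫ u in Ioc l r, f u) - ∫ u in Ioc l r, (f m + k * (u - m)) :=
    integral_sub hfi hTi
  rw [hsplit, hT] at hpos
  linarith


/-- The kernel function. -/
noncomputable def Fk (α ρ γ σ : ℝ) : ℝ → ℝ :=
  fun u => csch (ρ * u ^ γ) / Real.exp (α * u ^ γ) * u ^ (σ - 1)

lemma csch_div_exp (ρ α s : ℝ) :
    csch (ρ * s) / Real.exp (α * s) = Phi (ρ + α) (α - ρ) s := by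
  unfold csch Phi
  rw [div_div]
  congr 1
  rw [sub_mul, ← Real.exp_add, ← Real.exp_add]
  congr 2 <;> ring

lemma Fk_eq (α ρ γ σ : ℝ) :
    Fk α ρ γ σ = fun u : ℝ => Phi (ρ + α) (α - ρ) (u ^ γ) * u ^ (σ - 1) :=
  funext fun u => by rw [Fk, csch_div_exp]

section Props

variable {α ρ γ σ : ℝ} (hρ0 : 0 < ρ) (hαρ : -α < ρ) (hγ : 0 < γ) (hγσ : γ < σ) (hσ : σ ≤ 1)

include hρ0 hαρ

lemma ha' : 0 < ρ + α := by linarith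

lemma hb' : α - ρ < ρ + α := by linarith

lemma Fk_pos {u : ℝ} (hu : 0 < u) : 0 < Fk α ρ γ σ u := by
  rw [Fk_eq]
  exact mul_pos (phi_pos (hb' hρ0 hαρ) (Real.rpow_pos_of_pos hu γ))
    (Real.rpow_pos_of_pos hu _)

lemma Fk_continuousOn : ContinuousOn (Fk α ρ γ σ) (Ioi 0) := by
  rw [Fk_eq]
  apply ContinuousOn.mul
  · exact (phi_continuousOn (hb' hρ0 hαρ)).comp (rpow_continuousOn γ)
      (fun u hu => mem_Ioi.mpr (Real.rpow_pos_of_pos hu γ))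
  · exact rpow_continuousOn _

include hγ hγσ hσ

lemma Fk_strictConvexOn : StrictConvexOn ℝ (Ioi 0) (Fk α ρ γ σ) := by
  have ha := ha' hρ0 hαρ
  have hb := hb' hρ0 hαρ
  rw [Fk_eq]
  apply strictConvexOn_mul
    (comp_strictConvexOn (phi_strictConvexOn ha hb) (phi_strictAntiOn ha hb) hγ
      (lt_of_lt_of_le hγσ hσ))
    (rpow_convexOn hσ)
  · intro u hu
    exact phi_pos hb (Real.rpow_pos_of_pos hu γ)
  · intro u hu
    exact Real.rpow_pos_of_pos hu _
  · intro x hx y hy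
    have hPanti : AntitoneOn (fun u : ℝ => Phi (ρ + α) (α - ρ) (u ^ γ)) (Ioi 0) := by
      intro u hu v hv huv
      rcases eq_or_lt_of_le huv with rfl | huv'
      · exact le_refl _
      · exact ((phi_strictAntiOn ha hb) (mem_Ioi.mpr (Real.rpow_pos_of_pos hu γ))
          (mem_Ioi.mpr (Real.rpow_pos_of_pos hv γ))
          (Real.rpow_lt_rpow (le_of_lt hu) huv' hγ)).le
    rcases le_total x y with h | h
    · have h1 := hPanti hx hy h
      have h2 := rpow_antitoneOn hσ hx hy h
      have := mul_nonneg (sub_nonneg.mpr h1) (sub_nonneg.mpr h2)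
      linarith [this]
    · have h1 := hPanti hy hx h
      have h2 := rpow_antitoneOn hσ hy hx h
      nlinarith [mul_nonneg (sub_nonneg.mpr h1) (sub_nonneg.mpr h2)]

lemma Fk_integrableOn : IntegrableOn (Fk α ρ γ σ) (Ioi 0) := by
  have ha := ha' hρ0 hαρ
  have hb := hb' hρ0 hαρ
  set a := ρ + α with hadef
  set b := α - ρ with hbdef
  -- Bound on (0, 1]
  have hbound1 : ∀ u ∈ Ioc (0:ℝ) 1,
      Fk α ρ γ σ u ≤ (Real.exp |b| / ρ) * u ^ (σ - γ - 1) := by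
    rintro u ⟨hu0, hu1⟩
    have hs0 : 0 < u ^ γ := Real.rpow_pos_of_pos hu0 γ
    have hs1 : u ^ γ ≤ 1 := Real.rpow_le_one hu0.le hu1 hγ.le
    set s := u ^ γ
    have h2 : Real.exp (a * s) = Real.exp (b * s) * Real.exp ((a - b) * s) := by
      rw [← Real.exp_add]; congr 1; ring
    have h1 : (a - b) * s + 1 ≤ Real.exp ((a - b) * s) := Real.add_one_le_exp _
    have hab2 : a - b = 2 * ρ := by rw [hadef, hbdef]; ring
    have hexpb : Real.exp (-|b|) ≤ Real.exp (b * s) := by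
      apply Real.exp_le_exp.mpr
      rcases le_or_gt 0 b with h | h
      · have : 0 ≤ b * s := mul_nonneg h hs0.le
        have := abs_nonneg b
        linarith
      · rw [abs_of_neg h]
        nlinarith
    have hD : 2 * ρ * s * Real.exp (-|b|) ≤ Real.exp (a * s) - Real.exp (b * s) := by
      have hbs := Real.exp_pos (b * s)
      rw [hab2] at h1 h2
      have k1 : Real.exp (b * s) * (2 * ρ * s + 1) ≤ Real.exp (b * s) * Real.exp (2 * ρ * s) :=
        mul_le_mul_of_nonneg_left h1 hbs.le
      have k2 : 2 * ρ * s * Real.exp (-|b|) ≤ 2 * ρ * s * Real.exp (b * s) :=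
        mul_le_mul_of_nonneg_left hexpb (by positivity)
      nlinarith [k1, k2, h2]
    have hDpos : 0 < 2 * ρ * s * Real.exp (-|b|) := by positivity
    have hPhi_le : Phi a b s ≤ Real.exp |b| / ρ * s⁻¹ := by
      have step : Phi a b s ≤ 2 / (2 * ρ * s * Real.exp (-|b|)) := by
        unfold Phi
        gcongr
      refine step.trans (le_of_eq ?_)
      rw [Real.exp_neg]
      have hexp : Real.exp |b| ≠ 0 := (Real.exp_pos _).ne'
      field_simp
    have hrw : Fk α ρ γ σ u = Phi a b s * u ^ (σ - 1) := by rw [Fk_eq]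
    rw [hrw]
    have hmul : Phi a b s * u ^ (σ - 1) ≤ (Real.exp |b| / ρ * s⁻¹) * u ^ (σ - 1) :=
      mul_le_mul_of_nonneg_right hPhi_le (Real.rpow_nonneg hu0.le _)
    refine hmul.trans (le_of_eq ?_)
    have : s⁻¹ = u ^ (-γ) := by rw [Real.rpow_neg hu0.le]
    rw [this, mul_assoc, ← Real.rpow_add hu0]
    congr 2
    ring
  -- Bound on (1, ∞)
  obtain ⟨n, hn⟩ := exists_nat_ge (2 / γ)
  have hγn : 2 ≤ γ * n := by
    rw [div_le_iff₀ hγ] at hn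
    linarith
  have hε : 0 < 1 - Real.exp (-(2 * ρ)) := by
    have : Real.exp (-(2 * ρ)) < 1 := by
      rw [← Real.exp_zero]
      exact Real.exp_lt_exp.mpr (by linarith)
    linarith
  set C₂ : ℝ := 2 / (1 - Real.exp (-(2 * ρ))) * (n.factorial / a ^ n) with hC₂
  have hbound2 : ∀ u ∈ Ioi (1:ℝ), Fk α ρ γ σ u ≤ C₂ * u ^ (-(γ * n)) := by
    intro u hu
    have hu1 : (1:ℝ) ≤ u := le_of_lt hu
    have hu0 : (0:ℝ) < u := lt_of_lt_of_le one_pos hu1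
    have hs1 : 1 ≤ u ^ γ := Real.one_le_rpow hu1 hγ.le
    set s := u ^ γ
    have hs0 : (0:ℝ) < s := lt_of_lt_of_le one_pos hs1
    have hD2 : (1 - Real.exp (-(2 * ρ))) * Real.exp (a * s) ≤
        Real.exp (a * s) - Real.exp (b * s) := by
      have h2 : Real.exp (b * s) = Real.exp (a * s) * Real.exp (-(2 * ρ) * s) := by
        rw [← Real.exp_add]; congr 1; rw [hadef, hbdef]; ring
      have h3 : Real.exp (-(2 * ρ) * s) ≤ Real.exp (-(2 * ρ)) := by
        apply Real.exp_le_exp.mpr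
        nlinarith
      nlinarith [Real.exp_pos (a * s)]
    have hD2pos : 0 < (1 - Real.exp (-(2 * ρ))) * Real.exp (a * s) :=
      mul_pos hε (Real.exp_pos _)
    have hPhi2 : Phi a b s ≤ 2 / (1 - Real.exp (-(2 * ρ))) * (Real.exp (a * s))⁻¹ := by
      have step : Phi a b s ≤ 2 / ((1 - Real.exp (-(2 * ρ))) * Real.exp (a * s)) := by
        unfold Phi
        gcongr
      refine step.trans (le_of_eq ?_)
      field_simp
    have hexp2 : (Real.exp (a * s))⁻¹ ≤ n.factorial / (a ^ n * s ^ n) := by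
      have hp := Real.pow_div_factorial_le_exp (a * s) (mul_nonneg ha.le hs0.le) n
      have hfact : (0:ℝ) < (n.factorial : ℝ) := by positivity
      have hpow : (0:ℝ) < (a * s) ^ n := pow_pos (mul_pos ha hs0) n
      have h := one_div_le_one_div_of_le (div_pos hpow hfact) hp
      rw [one_div, one_div, inv_div, mul_pow] at h
      exact h
    have hsn : s ^ n = u ^ (γ * (n:ℝ)) := by
      rw [Real.rpow_mul hu0.le, Real.rpow_natCast]
    have hu_le1 : u ^ (σ - 1) ≤ 1 := Real.rpow_le_one_of_one_le_of_nonpos hu1 (by linarith)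
    have hsnpos : (0:ℝ) < s ^ n := pow_pos hs0 n
    have hanpos : (0:ℝ) < a ^ n := pow_pos ha n
    calc Fk α ρ γ σ u = Phi a b s * u ^ (σ - 1) := by rw [Fk_eq]
      _ ≤ Phi a b s * 1 := mul_le_mul_of_nonneg_left hu_le1 (phi_pos hb hs0).le
      _ = Phi a b s := mul_one _
      _ ≤ 2 / (1 - Real.exp (-(2 * ρ))) * (Real.exp (a * s))⁻¹ := hPhi2
      _ ≤ 2 / (1 - Real.exp (-(2 * ρ))) * (n.factorial / (a ^ n * s ^ n)) :=
          mul_le_mul_of_nonneg_left hexp2 (by positivity)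
      _ = C₂ * u ^ (-(γ * (n:ℝ))) := by
          rw [Real.rpow_neg hu0.le, ← hsn, hC₂]
          field_simp
  -- Assemble integrability
  have hsub1 : Ioc (0:ℝ) 1 ⊆ Ioi 0 := fun u hu => hu.1
  have hsub2 : Ioi (1:ℝ) ⊆ Ioi 0 := fun u hu => mem_Ioi.mpr (lt_trans one_pos hu)
  have hint1 : IntegrableOn (Fk α ρ γ σ) (Ioc 0 1) := by
    have hg : IntegrableOn (fun u : ℝ => (Real.exp |b| / ρ) * u ^ (σ - γ - 1)) (Ioc 0 1) := by
      have h := intervalIntegral.intervalIntegrable_rpow'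
        (show (-1 : ℝ) < σ - γ - 1 by linarith) (a := 0) (b := 1)
      rw [intervalIntegrable_iff_integrableOn_Ioc_of_le zero_le_one] at h
      exact h.const_mul _
    refine Integrable.mono hg (((Fk_continuousOn hρ0 hαρ).mono hsub1).aestronglyMeasurable
      measurableSet_Ioc) ?_
    filter_upwards [ae_restrict_mem measurableSet_Ioc] with u hu
    rw [Real.norm_eq_abs, Real.norm_eq_abs, abs_of_pos (Fk_pos hρ0 hαρ hu.1)]
    exact (hbound1 u hu).trans (le_abs_self _)
  have hint2 : IntegrableOn (Fk α ρ γ σ) (Ioi 1) := by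
    have hg : IntegrableOn (fun u : ℝ => C₂ * u ^ (-(γ * (n:ℝ)))) (Ioi 1) := by
      have h := integrableOn_Ioi_rpow_of_lt
        (show -(γ * (n:ℝ)) < -1 by linarith) (show (0:ℝ) < 1 from one_pos)
      exact h.const_mul _
    refine Integrable.mono hg (((Fk_continuousOn hρ0 hαρ).mono hsub2).aestronglyMeasurable
      measurableSet_Ioi) ?_
    filter_upwards [ae_restrict_mem measurableSet_Ioi] with u hu
    rw [Real.norm_eq_abs, Real.norm_eq_abs, abs_of_pos (Fk_pos hρ0 hαρ (hsub2 hu))]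
    exact (hbound2 u hu).trans (le_abs_self _)
  have h := hint1.union hint2
  rwa [Ioc_union_Ioi_eq_Ioi zero_le_one] at h

end Props


end Stmt10Aux

open Stmt10Aux

theorem stmt10 (α ρ γ σ β δ : ℝ)
    (hρ : ρ > max 0 (-α)) (hγ : 0 < γ) (hγσ : γ < σ) (hσ : σ ≤ 1)
    (hδ : δ = 1 ∨ δ = -1)
    (ν : ℕ → ℝ) (hν : ∀ n ≥ 1, 0 < ν n)
    (hdec : ∀ m n, 1 ≤ m → m ≤ n → ν n ≤ ν m)
    (V : ℕ → ℝ) (hV : ∀ n, V n = ∑ j ∈ Finset.Icc 1 n, ν j)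
    (hβ : β ≤ ν 1 / 2)
    (μ : ℝ → ℝ) (hμ : ∀ t > 0, 0 < μ t) (hμc : ContinuousOn μ (Set.Ioi 0))
    (hμint : ∀ x > 0, MeasureTheory.IntegrableOn μ (Set.Ioc 0 x))
    (U : ℝ → ℝ) (hU : ∀ x, U x = ∫ t in Set.Ioc (0 : ℝ) x, μ t)
    (x : ℝ) (hx : 0 < x) :
    (∑' n : ℕ,
        csch (ρ * U x ^ (δ * γ) * (V (n + 1) - β) ^ γ) /
            Real.exp (α * U x ^ (δ * γ) * (V (n + 1) - β) ^ γ) *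
          (U x ^ (δ * σ) * ν (n + 2) / (V (n + 1) - β) ^ (1 - σ))) <
      ∫ u in Set.Ioi (0 : ℝ), csch (ρ * u ^ γ) / Real.exp (α * u ^ γ) * u ^ (σ - 1) := by
  have hρ0 : 0 < ρ := lt_of_le_of_lt (le_max_left 0 (-α)) hρ
  have hαρ : -α < ρ := lt_of_le_of_lt (le_max_right 0 (-α)) hρ
  have hν1 : 0 < ν 1 := hν 1 le_rfl
  have hFconv := Fk_strictConvexOn (α := α) hρ0 hαρ hγ hγσ hσ
  have hFint := Fk_integrableOn (α := α) hρ0 hαρ hγ hγσ hσ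
  -- positivity of U x
  have hUx : 0 < U x := by
    rw [hU x]
    have h0 : 0 ≤ᵐ[volume.restrict (Ioc 0 x)] μ := by
      filter_upwards [ae_restrict_mem measurableSet_Ioc] with t ht using (hμ t ht.1).le
    rw [setIntegral_pos_iff_support_of_nonneg_ae h0 (hμint x hx)]
    have hss : Ioc 0 x ⊆ Function.support μ ∩ Ioc 0 x := fun t ht => ⟨(hμ t ht.1).ne', ht⟩
    calc (0:ℝ≥0∞) < volume (Ioc 0 x) := by
          rw [Real.volume_Ioc]; exact ENNReal.ofReal_pos.mpr (by linarith)
      _ ≤ _ := measure_mono hss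
  set c := U x ^ δ with hcdef
  have hc : 0 < c := Real.rpow_pos_of_pos hUx δ
  -- sequence facts
  have hν' : ∀ n : ℕ, 0 < ν (n + 1) := fun n => hν (n + 1) (by omega)
  have hVsucc : ∀ n : ℕ, V (n + 1) = V n + ν (n + 1) := by
    intro n
    rw [hV (n + 1), hV n]
    exact Finset.sum_Icc_succ_top (by omega) _
  have hV1 : V 1 = ν 1 := by rw [hV 1]; simp
  have htlb : ∀ n : ℕ, ν 1 / 2 ≤ V (n + 1) - β := by
    intro n
    induction n with
    | zero => rw [show (0:ℕ) + 1 = 1 from rfl, hV1]; linarith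
    | succ n ih =>
        rw [hVsucc (n + 1)]
        have := hν' (n + 1)
        linarith
  have ht : ∀ n : ℕ, 0 < V (n + 1) - β := fun n =>
    lt_of_lt_of_le (half_pos hν1) (htlb n)
  -- interval endpoints
  set L : ℕ → ℝ := fun n => c * (V (n + 1) - β) - c * ν (n + 2) / 2 with hLdef
  set R : ℕ → ℝ := fun n => c * (V (n + 1) - β) + c * ν (n + 2) / 2 with hRdef
  have hwpos : ∀ n : ℕ, 0 < c * ν (n + 2) := fun n => mul_pos hc (hν (n + 2) (by omega))
  have hLR : ∀ n, L n < R n := by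
    intro n
    have := hwpos n
    simp only [hLdef, hRdef]
    linarith
  have hL0 : 0 ≤ L 0 := by
    have h1 : ν 2 ≤ ν 1 := hdec 1 2 le_rfl (by omega)
    have h2 := htlb 0
    simp only [hLdef]
    nlinarith [mul_le_mul_of_nonneg_left h2 hc.le, mul_le_mul_of_nonneg_left h1 hc.le]
  have hRL : ∀ n, R n ≤ L (n + 1) := by
    intro n
    have hstep : V (n + 1 + 1) = V (n + 1) + ν (n + 2) := hVsucc (n + 1)
    have hd : ν (n + 3) ≤ ν (n + 2) := hdec (n + 2) (n + 3) (by omega) (by omega)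
    simp only [hLdef, hRdef]
    rw [hstep]
    nlinarith [mul_le_mul_of_nonneg_left hd hc.le]
  have hL_nonneg : ∀ n, 0 ≤ L n := by
    intro n
    induction n with
    | zero => exact hL0
    | succ n ih => exact ih.trans ((hLR n).le.trans (hRL n))
  have hchain : ∀ m n : ℕ, m < n → R m ≤ L n := by
    intro m n hmn
    induction n with
    | zero => omega
    | succ n ih =>
        rcases Nat.lt_succ_iff_lt_or_eq.mp hmn with h | h
        · exact (ih h).trans ((hLR n).le.trans (hRL n))
        · subst h; exact hRL m
  have hdisj : Pairwise (Function.onFun Disjoint fun n => Ioc (L n) (R n)) := by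
    intro i j hij
    rcases hij.lt_or_gt with h | h
    · exact Set.Ioc_disjoint_Ioc.mpr
        ((min_le_left _ _).trans ((hchain i j h).trans (le_max_right _ _)))
    · exact Set.Ioc_disjoint_Ioc.mpr
        ((min_le_right _ _).trans ((hchain j i h).trans (le_max_left _ _)))
  have hmid : ∀ n, (L n + R n) / 2 = c * (V (n + 1) - β) := by
    intro n; simp only [hLdef, hRdef]; ring
  have hwidth : ∀ n, R n - L n = c * ν (n + 2) := by
    intro n; simp only [hLdef, hRdef]; ring
  have hIoc_sub : (⋃ n, Ioc (L n) (R n)) ⊆ Ioi (0:ℝ) :=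
    iUnion_subset fun n u hu => mem_Ioi.mpr (lt_of_le_of_lt (hL_nonneg n) hu.1)
  have hintU : IntegrableOn (Fk α ρ γ σ) (⋃ n, Ioc (L n) (R n)) := hFint.mono_set hIoc_sub
  have hHasSum := hasSum_integral_iUnion (fun n => measurableSet_Ioc) hdisj hintU
  -- the strict interval bound
  have hlt : ∀ n, Fk α ρ γ σ (c * (V (n + 1) - β)) * (c * ν (n + 2)) <
      ∫ u in Ioc (L n) (R n), Fk α ρ γ σ u := by
    intro n
    have h := mid_mul_lt_integral hFconv hFint (hL_nonneg n) (hLR n)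
    rwa [hmid n, hwidth n] at h
  -- rewrite the summand
  have hsum_eq : ∀ n : ℕ,
      csch (ρ * U x ^ (δ * γ) * (V (n + 1) - β) ^ γ) /
          Real.exp (α * U x ^ (δ * γ) * (V (n + 1) - β) ^ γ) *
        (U x ^ (δ * σ) * ν (n + 2) / (V (n + 1) - β) ^ (1 - σ)) =
      Fk α ρ γ σ (c * (V (n + 1) - β)) * (c * ν (n + 2)) := by
    intro n
    have hT : 0 < V (n + 1) - β := ht n
    set T := V (n + 1) - β with hTdef
    have h1 : (c * T) ^ γ = U x ^ (δ * γ) * T ^ γ := by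
      rw [Real.mul_rpow hc.le hT.le]
      congr 1
      rw [hcdef, ← Real.rpow_mul hUx.le]
    have hA : ρ * U x ^ (δ * γ) * T ^ γ = ρ * (c * T) ^ γ := by rw [h1]; ring
    have hB : α * U x ^ (δ * γ) * T ^ γ = α * (c * T) ^ γ := by rw [h1]; ring
    have h2 : (c * T) ^ (σ - 1) * (c * ν (n + 2)) =
        U x ^ (δ * σ) * ν (n + 2) / T ^ (1 - σ) := by
      rw [Real.mul_rpow hc.le hT.le]
      have e1 : c ^ (σ - 1) * c = c ^ σ := by
        rw [← Real.rpow_add_one hc.ne' (σ - 1)]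
        norm_num
      have e2 : c ^ σ = U x ^ (δ * σ) := by rw [hcdef, ← Real.rpow_mul hUx.le]
      have e3 : T ^ (σ - 1) = (T ^ (1 - σ))⁻¹ := by
        rw [show σ - 1 = -(1 - σ) by ring, Real.rpow_neg hT.le]
      rw [e3]
      calc c ^ (σ - 1) * (T ^ (1 - σ))⁻¹ * (c * ν (n + 2))
          = (c ^ (σ - 1) * c) * ν (n + 2) * (T ^ (1 - σ))⁻¹ := by ring
        _ = U x ^ (δ * σ) * ν (n + 2) / T ^ (1 - σ) := by
            rw [e1, e2, div_eq_mul_inv]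
    rw [hA, hB, ← h2]
    simp only [Fk]
    ring
  rw [tsum_congr hsum_eq]
  have hpos_term : ∀ n, 0 ≤ Fk α ρ γ σ (c * (V (n + 1) - β)) * (c * ν (n + 2)) := fun n =>
    (mul_pos (Fk_pos hρ0 hαρ (mul_pos hc (ht n))) (hwpos n)).le
  calc (∑' n, Fk α ρ γ σ (c * (V (n + 1) - β)) * (c * ν (n + 2)))
      < ∑' n, ∫ u in Ioc (L n) (R n), Fk α ρ γ σ u :=
        Summable.tsum_lt_tsum_of_nonneg hpos_term (fun n => (hlt n).le) (hlt 0) hHasSum.summable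
    _ = ∫ u in ⋃ n, Ioc (L n) (R n), Fk α ρ γ σ u := hHasSum.tsum_eq
    _ ≤ ∫ u in Ioi (0:ℝ), Fk α ρ γ σ u := by
        apply setIntegral_mono_set hFint
        · filter_upwards [ae_restrict_mem measurableSet_Ioi] with u hu
          exact (Fk_pos hρ0 hαρ hu).le
        · exact HasSubset.Subset.eventuallyLE hIoc_sub
    _ = _ := rfl
end

section
/- Under the hypotheses: $\rho > \max\{0,-\alpha\}$, $0 < \gamma < \sigma$, $(\nu_n)$ a positive decreasing sequence with partial sums $V_n$, $\beta \le \nu_1/2$, $U(x) = \int_0^x \mu(t)\,dt$ for positive continuous $\mu$, $\delta \in \{-1,1\}$, the weight coefficient $\varpi_{\delta}(\sigma, n) = \int_0^{\infty} \frac{\operatorname{csch}(\rho U^{\delta\gamma}(x)(V_n-\beta)^{\gamma})}{e^{\alpha U^{\delta\gamma}(x)(V_n-\beta)^{\gamma}}} \cdot \frac{(V_n-\beta)^{\sigma}\mu(x)}{U^{1-\delta\sigma}(x)}\,dx$ satisfies $\varpi_{\delta}(\sigma, n) \le k(\sigma)$ for all $n \in \mathbb{N}$, where $k(\sigma) = \int_0^{\infty}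 \frac{\operatorname{csch}(\rho u^{\gamma})}{e^{\alpha u^{\gamma}}} u^{\sigma-1}\,du$. Moreover, if $U(\infty) = \infty$, then $\varpi_{\delta}(\sigma, n) = k(\sigma)$ for all $n$. -/
open Real Set MeasureTheory Filter

lemma csch_eq_inv_sinh (t : ℝ) : csch t = (Real.sinh t)⁻¹ := by
  rw [csch, Real.sinh_eq]; rw [div_eq_mul_inv, div_eq_mul_inv]
  rw [mul_inv, inv_inv]; ring

lemma csch_pos {t : ℝ} (h : 0 < t) : 0 < csch t := by
  rw [csch_eq_inv_sinh]; exact inv_pos.2 (Real.sinh_pos_iff.2 h)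

lemma csch_le_inv {t : ℝ} (h : 0 < t) : csch t ≤ t⁻¹ := by
  rw [csch_eq_inv_sinh]
  exact inv_anti₀ h (Real.self_lt_sinh_iff.2 h).le

lemma exp_sub_exp_neg_pos {t : ℝ} (h : 0 < t) : 0 < Real.exp t - Real.exp (-t) := by
  have := Real.exp_lt_exp.2 (show -t < t by linarith)
  linarith

lemma csch_le_exp {t r : ℝ} (hr : 0 < r) (h : r ≤ t) :
    csch t ≤ 2 / (1 - Real.exp (-2 * r)) * Real.exp (-t) := by
  have h2r : 0 < 1 - Real.exp (-2 * r) := by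
    have : Real.exp (-2 * r) < 1 := Real.exp_lt_one_iff.2 (by linarith)
    linarith
  have ht : 0 < t := lt_of_lt_of_le hr h
  have key : Real.exp t - Real.exp (-t) = Real.exp t * (1 - Real.exp (-2 * t)) := by
    rw [mul_sub, mul_one, ← Real.exp_add]; ring_nf
  have h2t : 1 - Real.exp (-2 * r) ≤ 1 - Real.exp (-2 * t) := by
    have := Real.exp_le_exp.2 (show -2 * t ≤ -2 * r by linarith)
    linarith
  rw [csch, key]
  have h2t' : 0 < 1 - Real.exp (-2 * t) := lt_of_lt_of_le h2r h2t
  rw [div_le_iff₀ (mul_pos (Real.exp_pos t) h2t')]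
  rw [div_mul_eq_mul_div, div_mul_eq_mul_div, le_div_iff₀ h2r]
  have hee : Real.exp (-t) * Real.exp t = 1 := by rw [← Real.exp_add]; simp
  have he : 0 < Real.exp (-t) := Real.exp_pos _
  nlinarith [Real.exp_pos t]

lemma Fcont (α ρ γ σ : ℝ) (hρ : 0 < ρ) :
    ContinuousOn (fun u : ℝ => csch (ρ * u ^ γ) / Real.exp (α * u ^ γ) * u ^ (σ - 1))
      (Set.Ioi 0) := by
  have hrp : ∀ r : ℝ, ContinuousOn (fun u : ℝ => u ^ r) (Set.Ioi (0:ℝ)) := fun r u hu =>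
    (Real.continuousAt_rpow_const u r (Or.inl (ne_of_gt hu))).continuousWithinAt
  have ht : ContinuousOn (fun u : ℝ => ρ * u ^ γ) (Set.Ioi 0) := continuousOn_const.mul (hrp γ)
  have hcsch : ContinuousOn (fun u : ℝ => csch (ρ * u ^ γ)) (Set.Ioi 0) := by
    apply ContinuousOn.div continuousOn_const
    · exact (Real.continuous_exp.comp_continuousOn ht).sub
        (Real.continuous_exp.comp_continuousOn ht.neg)
    · intro u hu
      exact ne_of_gt (exp_sub_exp_neg_pos (mul_pos hρ (Real.rpow_pos_of_pos hu γ)))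
  exact (hcsch.div (Real.continuous_exp.comp_continuousOn (continuousOn_const.mul (hrp γ)))
    (fun u _ => (Real.exp_pos _).ne')).mul (hrp (σ - 1))

lemma Fnonneg (α ρ γ σ : ℝ) (hρ : 0 < ρ) {u : ℝ} (hu : 0 < u) :
    0 < csch (ρ * u ^ γ) / Real.exp (α * u ^ γ) * u ^ (σ - 1) := by
  have h1 : 0 < csch (ρ * u ^ γ) := csch_pos (mul_pos hρ (Real.rpow_pos_of_pos hu γ))
  positivity

lemma Fint (α ρ γ σ : ℝ) (hρ : 0 < ρ) (hρα : 0 < ρ + α) (hγ : 0 < γ) (hγσ : γ < σ) :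
    MeasureTheory.IntegrableOn
      (fun u : ℝ => csch (ρ * u ^ γ) / Real.exp (α * u ^ γ) * u ^ (σ - 1))
      (Set.Ioi 0) := by
  set F : ℝ → ℝ := fun u => csch (ρ * u ^ γ) / Real.exp (α * u ^ γ) * u ^ (σ - 1) with hF
  -- get M ≥ 1 such that u^(σ+1) * exp (-(ρ+α) * u^γ) ≤ 1 for u ≥ M
  have htend : Tendsto (fun u : ℝ => u ^ (σ + 1) * Real.exp (-(ρ + α) * u ^ γ))
      atTop (nhds 0) := by
    have h1 := (tendsto_rpow_mul_exp_neg_mul_atTop_nhds_zero ((σ + 1)/γ) (ρ + α) hρα).comp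
      (tendsto_rpow_atTop hγ)
    apply h1.congr'
    filter_upwards [eventually_gt_atTop (0:ℝ)] with u hu
    rw [Function.comp_apply, ← Real.rpow_mul hu.le,
      mul_div_cancel₀ _ (ne_of_gt hγ)]
  obtain ⟨M, hM⟩ := (htend.eventually_lt_const one_pos).exists_forall_of_atTop
  set N := max M 1 with hNdef
  have hN1 : (1:ℝ) ≤ N := le_max_right _ _
  have hN0 : (0:ℝ) < N := by linarith
  have key : ∀ u ≥ N, u ^ (σ + 1) * Real.exp (-(ρ + α) * u ^ γ) ≤ 1 := fun u hu =>
    (hM u (le_trans (le_max_left _ _) hu)).le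
  have hFcont := Fcont α ρ γ σ hρ
  -- part A : Ioc 0 1
  have intA : IntegrableOn F (Set.Ioc 0 1) := by
    have hg : IntegrableOn (fun u : ℝ => Real.exp |α| / ρ * u ^ (σ - γ - 1))
        (Set.Ioc (0:ℝ) 1) := by
      apply Integrable.const_mul
      have h := intervalIntegral.intervalIntegrable_rpow' (a := (0:ℝ)) (b := 1)
        (r := σ - γ - 1) (by linarith)
      rwa [intervalIntegrable_iff_integrableOn_Ioc_of_le zero_le_one] at h
    apply hg.mono' ((hFcont.mono Set.Ioc_subset_Ioi_self).aestronglyMeasurable measurableSet_Ioc)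
    rw [MeasureTheory.ae_restrict_iff' measurableSet_Ioc]
    filter_upwards with u hu
    have hu0 : 0 < u := hu.1
    have ht : 0 < ρ * u ^ γ := mul_pos hρ (Real.rpow_pos_of_pos hu0 γ)
    have hrg : (0:ℝ) ≤ u ^ γ := (Real.rpow_pos_of_pos hu0 γ).le
    rw [Real.norm_eq_abs, abs_of_pos (Fnonneg α ρ γ σ hρ hu0)]
    have h1 : csch (ρ * u ^ γ) ≤ (ρ * u ^ γ)⁻¹ := csch_le_inv ht
    have h2 : (Real.exp (α * u ^ γ))⁻¹ ≤ Real.exp |α| := by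
      rw [← Real.exp_neg]
      apply Real.exp_le_exp.2
      have hle1 : u ^ γ ≤ 1 := Real.rpow_le_one hu0.le hu.2 hγ.le
      nlinarith [neg_abs_le α, abs_nonneg α]
    calc csch (ρ * u ^ γ) / Real.exp (α * u ^ γ) * u ^ (σ - 1)
        = csch (ρ * u ^ γ) * (Real.exp (α * u ^ γ))⁻¹ * u ^ (σ - 1) := by
          rw [div_eq_mul_inv]
      _ ≤ (ρ * u ^ γ)⁻¹ * Real.exp |α| * u ^ (σ - 1) := by
          apply mul_le_mul_of_nonneg_right _ (Real.rpow_nonneg hu0.le _)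
          exact mul_le_mul h1 h2 (inv_nonneg.2 (Real.exp_pos _).le) (inv_nonneg.2 ht.le)
      _ = Real.exp |α| / ρ * u ^ (σ - γ - 1) := by
          rw [mul_inv, show σ - γ - 1 = -γ + (σ - 1) by ring, Real.rpow_add hu0,
            Real.rpow_neg hu0.le]
          ring
  -- part mid : Ioc 1 N
  have intMid : IntegrableOn F (Set.Ioc 1 N) := by
    have : Set.Icc (1:ℝ) N ⊆ Set.Ioi 0 := fun x hx => lt_of_lt_of_le one_pos hx.1
    exact ((hFcont.mono this).integrableOn_Icc).mono_set Set.Ioc_subset_Icc_self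
  -- part B : Ioi N
  have intB : IntegrableOn F (Set.Ioi N) := by
    have hsub : Set.Ioi N ⊆ Set.Ioi (0:ℝ) := fun x hx => lt_trans hN0 hx
    have hg : IntegrableOn (fun u : ℝ => 2 / (1 - Real.exp (-2 * ρ)) * u ^ (-2:ℝ))
        (Set.Ioi N) := (integrableOn_Ioi_rpow_of_lt (by norm_num) hN0).const_mul _
    apply hg.mono' ((hFcont.mono hsub).aestronglyMeasurable measurableSet_Ioi)
    rw [MeasureTheory.ae_restrict_iff' measurableSet_Ioi]
    filter_upwards with u hu
    have hu0 : 0 < u := lt_trans hN0 hu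
    have hu1 : 1 ≤ u := le_trans hN1 hu.le
    have hug1 : 1 ≤ u ^ γ := by
      have := Real.rpow_le_rpow zero_le_one hu1 hγ.le
      rwa [Real.one_rpow] at this
    have htρ : ρ ≤ ρ * u ^ γ := by nlinarith
    have hC2 : 0 < 2 / (1 - Real.exp (-2 * ρ)) := by
      have : Real.exp (-2 * ρ) < 1 := Real.exp_lt_one_iff.2 (by linarith)
      exact div_pos two_pos (by linarith)
    rw [Real.norm_eq_abs, abs_of_pos (Fnonneg α ρ γ σ hρ hu0)]
    have h1 : csch (ρ * u ^ γ) ≤ 2 / (1 - Real.exp (-2 * ρ)) * Real.exp (-(ρ * u ^ γ)) :=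
      csch_le_exp hρ htρ
    calc csch (ρ * u ^ γ) / Real.exp (α * u ^ γ) * u ^ (σ - 1)
        = csch (ρ * u ^ γ) * Real.exp (-(α * u ^ γ)) * u ^ (σ - 1) := by
          rw [div_eq_mul_inv, Real.exp_neg]
      _ ≤ (2 / (1 - Real.exp (-2 * ρ)) * Real.exp (-(ρ * u ^ γ))) * Real.exp (-(α * u ^ γ))
            * u ^ (σ - 1) := by
          apply mul_le_mul_of_nonneg_right _ (Real.rpow_nonneg hu0.le _)
          exact mul_le_mul_of_nonneg_right h1 (Real.exp_pos _).le
      _ = 2 / (1 - Real.exp (-2 * ρ)) * u ^ (-2:ℝ)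
            * (u ^ (σ + 1) * Real.exp (-(ρ + α) * u ^ γ)) := by
          have he : Real.exp (-(ρ * u ^ γ)) * Real.exp (-(α * u ^ γ))
              = Real.exp (-(ρ + α) * u ^ γ) := by rw [← Real.exp_add]; ring_nf
          rw [mul_assoc (2 / (1 - Real.exp (-2 * ρ))), he,
            show σ - 1 = -2 + (σ + 1) by ring, Real.rpow_add hu0]
          ring
      _ ≤ 2 / (1 - Real.exp (-2 * ρ)) * u ^ (-2:ℝ) * 1 := by
          apply mul_le_mul_of_nonneg_left (key u hu.le)
          positivity
      _ = 2 / (1 - Real.exp (-2 * ρ)) * u ^ (-2:ℝ) := mul_one _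
  have hsplit : Set.Ioi (0:ℝ) = (Set.Ioc 0 1 ∪ Set.Ioc 1 N) ∪ Set.Ioi N := by
    rw [Set.Ioc_union_Ioc_eq_Ioc zero_le_one hN1, Set.Ioc_union_Ioi_eq_Ioi hN0.le]
  rw [hsplit]
  exact (intA.union intMid).union intB

theorem stmt11 (α ρ γ σ β δ : ℝ)
    (hρ : ρ > max 0 (-α)) (hγ : 0 < γ) (hγσ : γ < σ)
    (hδ : δ = 1 ∨ δ = -1)
    (ν : ℕ → ℝ) (hν : ∀ n ≥ 1, 0 < ν n)
    (hdec : ∀ m n, 1 ≤ m → m ≤ n → ν n ≤ ν m)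
    (V : ℕ → ℝ) (hV : ∀ n, V n = ∑ j ∈ Finset.Icc 1 n, ν j)
    (hβ : β ≤ ν 1 / 2)
    (μ : ℝ → ℝ) (hμ : ∀ t > 0, 0 < μ t) (hμc : ContinuousOn μ (Set.Ioi 0))
    (hμint : ∀ x > 0, MeasureTheory.IntegrableOn μ (Set.Ioc 0 x))
    (U : ℝ → ℝ) (hU : ∀ x, U x = ∫ t in Set.Ioc (0 : ℝ) x, μ t) :
    (∀ n ≥ 1,
      (∫ x in Set.Ioi (0 : ℝ),
          csch (ρ * U x ^ (δ * γ) * (V n - β) ^ γ) /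
              Real.exp (α * U x ^ (δ * γ) * (V n - β) ^ γ) *
            ((V n - β) ^ σ * μ x / U x ^ (1 - δ * σ))) ≤
        ∫ u in Set.Ioi (0 : ℝ), csch (ρ * u ^ γ) / Real.exp (α * u ^ γ) * u ^ (σ - 1)) ∧
    (Filter.Tendsto U Filter.atTop Filter.atTop →
      ∀ n ≥ 1,
        (∫ x in Set.Ioi (0 : ℝ),
            csch (ρ * U x ^ (δ * γ) * (V n - β) ^ γ) /
                Real.exp (α * U x ^ (δ * γ) * (V n - β) ^ γ) *
              ((V n - β) ^ σ * μ x / U x ^ (1 - δ * σ))) =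
          ∫ u in Set.Ioi (0 : ℝ), csch (ρ * u ^ γ) / Real.exp (α * u ^ γ) * u ^ (σ - 1)) := by
  have hρ0 : 0 < ρ := lt_of_le_of_lt (le_max_left _ _) hρ
  have hρα : 0 < ρ + α := by
    have := lt_of_le_of_lt (le_max_right 0 (-α)) hρ; linarith
  have hδ0 : δ ≠ 0 := by rcases hδ with h | h <;> rw [h] <;> norm_num
  have hδabs : |δ| = 1 := by rcases hδ with h | h <;> rw [h] <;> norm_num
  have hδδ : δ * δ = 1 := by rcases hδ with h | h <;> rw [h] <;> norm_num
  -- U basics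
  have hU0 : U 0 = 0 := by rw [hU]; simp
  have hUderiv : ∀ x, 0 < x → HasDerivAt U (μ x) x := by
    intro x hx
    have ha : 0 < x / 2 := by linarith
    have hii : ∀ y, 0 < y → IntervalIntegrable μ MeasureTheory.volume (x / 2) y := by
      intro y hy
      rw [intervalIntegrable_iff]
      apply (hμint (max (x / 2) y) (lt_of_lt_of_le ha (le_max_left _ _))).mono_set
      refine subset_trans ?_ (Set.Ioc_subset_Ioc (le_of_lt (lt_min ha hy)) le_rfl)
      rw [Set.uIoc]
    have hw : HasDerivAt (fun y => ∫ t in (x / 2)..y, μ t) (μ x) x :=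
      intervalIntegral.integral_hasDerivAt_right (hii x hx)
        ⟨Set.Ioi 0, Ioi_mem_nhds hx, hμc.aestronglyMeasurable measurableSet_Ioi⟩
        (hμc.continuousAt (Ioi_mem_nhds hx))
    apply (hw.const_add (U (x / 2))).congr_of_eventuallyEq
    filter_upwards [Ioi_mem_nhds hx] with y hy
    have h0a : IntervalIntegrable μ MeasureTheory.volume 0 (x / 2) := by
      rw [intervalIntegrable_iff_integrableOn_Ioc_of_le ha.le]
      exact hμint (x / 2) ha
    have hadd : ∫ t in (0:ℝ)..y, μ t
        = (∫ t in (0:ℝ)..(x / 2), μ t) + ∫ t in (x / 2)..y, μ t :=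
      (intervalIntegral.integral_add_adjacent_intervals h0a (hii y hy)).symm
    rw [hU y, hU (x / 2),
      show (∫ t in Set.Ioc (0:ℝ) y, μ t) = ∫ t in (0:ℝ)..y, μ t from
        (intervalIntegral.integral_of_le (le_of_lt hy)).symm,
      show (∫ t in Set.Ioc (0:ℝ) (x / 2), μ t) = ∫ t in (0:ℝ)..(x / 2), μ t from
        (intervalIntegral.integral_of_le ha.le).symm, hadd]
  have hUcont : ContinuousOn U (Set.Ici 0) := by
    intro x hx
    have hx0 : (0:ℝ) ≤ x := hx
    have hint : MeasureTheory.IntegrableOn μ (Set.Icc 0 (x + 1)) := by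
      rw [integrableOn_Icc_iff_integrableOn_Ioc]
      exact hμint (x + 1) (by linarith)
    have hcont := (intervalIntegral.continuousOn_primitive hint).congr
      (fun y _ => hU y)
    have hmem : Set.Icc (0:ℝ) (x + 1) ∈ nhdsWithin x (Set.Ici 0) := by
      rw [← Set.Ici_inter_Iic]
      exact Filter.inter_mem self_mem_nhdsWithin
        (mem_nhdsWithin_of_mem_nhds (Iic_mem_nhds (by linarith)))
    exact ContinuousWithinAt.mono_of_mem_nhdsWithin (hcont x ⟨hx0, by linarith⟩) hmem
  have hUmono : StrictMonoOn U (Set.Ici 0) := by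
    apply strictMonoOn_of_deriv_pos (convex_Ici 0) hUcont
    intro x hx
    rw [interior_Ici] at hx
    rw [(hUderiv x hx).deriv]
    exact hμ x hx
  have hUpos : ∀ x, 0 < x → 0 < U x := by
    intro x hx
    have := hUmono Set.self_mem_Ici (Set.mem_Ici.2 hx.le) hx
    rwa [hU0] at this
  -- positivity of V n - β
  have hc : ∀ n : ℕ, 1 ≤ n → 0 < V n - β := by
    intro n hn
    have h1 : ν 1 ≤ V n := by
      rw [hV]
      exact Finset.single_le_sum (f := ν)
        (fun j hj => (hν j (Finset.mem_Icc.1 hj).1).le)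
        (Finset.mem_Icc.2 ⟨le_refl 1, hn⟩)
    have := hν 1 le_rfl
    linarith
  -- change of variables
  have main : ∀ n : ℕ, 1 ≤ n →
      (∫ x in Set.Ioi (0 : ℝ),
          csch (ρ * U x ^ (δ * γ) * (V n - β) ^ γ) /
              Real.exp (α * U x ^ (δ * γ) * (V n - β) ^ γ) *
            ((V n - β) ^ σ * μ x / U x ^ (1 - δ * σ))) =
        ∫ u in (fun x => (V n - β) * U x ^ δ) '' Set.Ioi 0,
          csch (ρ * u ^ γ) / Real.exp (α * u ^ γ) * u ^ (σ - 1) := by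
    intro n hn
    set c := V n - β with hcdef
    have hcn : 0 < c := hc n hn
    have hg : ∀ x ∈ Set.Ioi (0:ℝ),
        HasDerivWithinAt (fun x => c * U x ^ δ)
          (c * (μ x * δ * U x ^ (δ - 1))) (Set.Ioi 0) x := by
      intro x hx
      exact (((hUderiv x hx).rpow_const (Or.inl (hUpos x hx).ne')).const_mul c).hasDerivWithinAt
    have hinj : Set.InjOn (fun x => c * U x ^ δ) (Set.Ioi 0) := by
      intro x1 h1 x2 h2 he
      have h' : U x1 ^ δ = U x2 ^ δ := mul_left_cancel₀ (ne_of_gt hcn) he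
      have h'' : U x1 = U x2 :=
        Real.rpow_left_injOn hδ0 (hUpos x1 h1).le (hUpos x2 h2).le h'
      exact hUmono.injOn (Set.mem_Ici.2 (le_of_lt h1)) (Set.mem_Ici.2 (le_of_lt h2)) h''
    rw [MeasureTheory.integral_image_eq_integral_abs_deriv_smul measurableSet_Ioi hg hinj]
    apply MeasureTheory.setIntegral_congr_fun measurableSet_Ioi
    intro x hx
    have hu0 : 0 < U x := hUpos x hx
    have hμx : 0 < μ x := hμ x hx
    simp only [smul_eq_mul]
    have habs : |c * (μ x * δ * U x ^ (δ - 1))| = c * μ x * U x ^ (δ - 1) := by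
      rw [abs_mul, abs_mul, abs_mul, abs_of_pos hcn, abs_of_pos hμx, hδabs,
        abs_of_pos (Real.rpow_pos_of_pos hu0 _)]
      ring
    have harg : (c * U x ^ δ) ^ γ = U x ^ (δ * γ) * c ^ γ := by
      rw [Real.mul_rpow hcn.le (Real.rpow_pos_of_pos hu0 δ).le, ← Real.rpow_mul hu0.le]
      ring
    have hpow : (c * U x ^ δ) ^ (σ - 1) = c ^ (σ - 1) * U x ^ (δ * (σ - 1)) := by
      rw [Real.mul_rpow hcn.le (Real.rpow_pos_of_pos hu0 δ).le, ← Real.rpow_mul hu0.le]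
    have hcσ : c ^ (σ - 1) * c = c ^ σ := by
      rw [← Real.rpow_add_one (ne_of_gt hcn)]
      norm_num
    have hUσ : U x ^ (δ * (σ - 1)) * U x ^ (δ - 1) = (U x ^ (1 - δ * σ))⁻¹ := by
      rw [← Real.rpow_add hu0, ← Real.rpow_neg hu0.le]
      congr 1
      ring
    rw [habs, harg, hpow, ← mul_assoc ρ, ← mul_assoc α, div_eq_mul_inv, div_eq_mul_inv,
      ← hcσ, ← hUσ]
    ring
  -- image subset
  have himg : ∀ n : ℕ, 1 ≤ n →
      (fun x => (V n - β) * U x ^ δ) '' Set.Ioi 0 ⊆ Set.Ioi 0 := by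
    intro n hn
    rintro _ ⟨x, hx, rfl⟩
    exact mul_pos (hc n hn) (Real.rpow_pos_of_pos (hUpos x hx) δ)
  constructor
  · intro n hn
    rw [main n hn]
    apply MeasureTheory.setIntegral_mono_set (Fint α ρ γ σ hρ0 hρα hγ hγσ)
    · filter_upwards [MeasureTheory.ae_restrict_mem measurableSet_Ioi] with u hu
      exact (Fnonneg α ρ γ σ hρ0 hu).le
    · exact (himg n hn).eventuallyLE
  · intro htop n hn
    have hsurj : ∀ z : ℝ, 0 < z → ∃ x, 0 < x ∧ U x = z := by
      intro z hz
      obtain ⟨b, hzb, hb0⟩ := ((htop.eventually_gt_atTop z).and (Filter.eventually_gt_atTop 0)).exists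
      have hmem : z ∈ Set.Icc (U 0) (U b) := ⟨by rw [hU0]; exact hz.le, hzb.le⟩
      obtain ⟨x, hx, hxz⟩ :=
        intermediate_value_Icc hb0.le (hUcont.mono Set.Icc_subset_Ici_self) hmem
      refine ⟨x, ?_, hxz⟩
      rcases eq_or_lt_of_le hx.1 with h | h
      · exfalso
        rw [← h, hU0] at hxz
        exact hz.ne hxz
      · exact h
    have himg_eq : (fun x => (V n - β) * U x ^ δ) '' Set.Ioi 0 = Set.Ioi 0 := by
      apply Set.Subset.antisymm (himg n hn)
      intro y hy
      have hcn : 0 < V n - β := hc n hn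
      have hyc : 0 < y / (V n - β) := div_pos hy hcn
      obtain ⟨x, hx0, hxU⟩ := hsurj ((y / (V n - β)) ^ δ) (Real.rpow_pos_of_pos hyc δ)
      refine ⟨x, hx0, ?_⟩
      show (V n - β) * U x ^ δ = y
      rw [hxU, ← Real.rpow_mul hyc.le, hδδ, Real.rpow_one, mul_div_cancel₀ _ (ne_of_gt hcn)]
    rw [main n hn, himg_eq]
end

section
/- Let $\rho > \max\{0,-\alpha\}$, $0 < \gamma < \sigma \le 1$, $(\nu_n)$ positive decreasing with $V_n = \sum_{j\le n}\nu_j$, $V(\infty) = \infty$, $\beta \le \nu_1/2$, $U(x) = \int_0^x\mu(t)dt$ with $\mu$ positive continuous, $\delta \in \{-1,1\}$. Then for every $x > 0$: $\omega_{\delta}(\sigma, x) > k(\sigma)\bigl(1 - \theta_{\delta}(\sigma,x)\bigr)$, where $\omega_{\delta}(\sigma,x) = \sum_{n\ge1} \operatorname{csch}(\rho U^{\delta\gamma}(x)(V_n-\beta)^{\gamma}) e^{-\alpha U^{\delta\gamma}(x)(V_n-\beta)^{\gamma}} \frac{U^{\delta\sigma}(x)\nu_{n+1}}{(V_n-\beta)^{1-\sigma}}$,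 $k(\sigma) = \int_0^{\infty}\operatorname{csch}(\rho u^{\gamma})e^{-\alpha u^{\gamma}}u^{\sigma-1}du$, and $\theta_{\delta}(\sigma,x) = \frac{1}{k(\sigma)}\int_0^{U^{\delta}(x)(\nu_1 - \beta)}\operatorname{csch}(\rho u^{\gamma})e^{-\alpha u^{\gamma}}u^{\sigma-1}du \in (0,1)$. -/
open Real MeasureTheory Set



lemma aux_int_s14 {s b p : ℝ} (hs : -1 < s) (hp : 0 < p) (hb : 0 < b) :
    IntegrableOn (fun x : ℝ => x ^ s * Real.exp (-b * x ^ p)) (Ioi 0) := by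
  have hs' : (-1:ℝ) < (s + 1) / p - 1 := by
    have : 0 < (s+1)/p := div_pos (by linarith) hp; linarith
  have base : IntegrableOn (fun y : ℝ => y ^ ((s + 1) / p - 1) * Real.exp (-b * y ^ (1:ℝ)))
      (Ioi 0) := integrableOn_rpow_mul_exp_neg_mul_rpow hs' one_pos hb
  have base' : IntegrableOn (fun y : ℝ => y ^ ((s + 1) / p - 1) * Real.exp (-b * y)) (Ioi 0) := by
    simpa [Real.rpow_one] using base
  have h := (integrableOn_Ioi_comp_rpow_iff'
      (fun y : ℝ => y ^ ((s + 1) / p - 1) * Real.exp (-b * y)) hp.ne').mpr base'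
  refine h.congr_fun (fun x hx => ?_) measurableSet_Ioi
  have hx' : (0:ℝ) < x := hx
  simp only [smul_eq_mul]; rw [← mul_assoc, ← Real.rpow_mul hx'.le, ← Real.rpow_add hx']
  congr 2
  field_simp; ring

noncomputable def Ffun (α ρ γ σ : ℝ) (u : ℝ) : ℝ :=
  csch (ρ * u ^ γ) / Real.exp (α * u ^ γ) * u ^ (σ - 1)

lemma csch_div_exp (ρ α w : ℝ) :
    csch (ρ * w) / Real.exp (α * w) =
      2 / (Real.exp ((ρ + α) * w) - Real.exp ((α - ρ) * w)) := by
  unfold csch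
  rw [div_div]
  congr 1
  rw [sub_mul, ← Real.exp_add, ← Real.exp_add]
  ring_nf

lemma Dmono {a b : ℝ} (hb : b < a) (ha : 0 < a) {w₁ w₂ : ℝ} (h1 : 0 ≤ w₁) (h12 : w₁ < w₂) :
    Real.exp (a * w₁) - Real.exp (b * w₁) < Real.exp (a * w₂) - Real.exp (b * w₂) := by
  rcases le_or_gt b 0 with hb0 | hb0
  · have h2 : Real.exp (b * w₂) ≤ Real.exp (b * w₁) :=
      Real.exp_le_exp.2 (by nlinarith)
    have h3 : Real.exp (a * w₁) < Real.exp (a * w₂) :=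
      Real.exp_lt_exp.2 (by nlinarith)
    linarith
  · have key : Real.exp (b * w₂) - Real.exp (b * w₁) < Real.exp (a * w₂) - Real.exp (a * w₁) := by
      have e1 : Real.exp (b * w₂) - Real.exp (b * w₁)
          = Real.exp (b * w₁) * (Real.exp (b * (w₂ - w₁)) - 1) := by
        rw [mul_sub, ← Real.exp_add]; ring_nf
      have e2 : Real.exp (a * w₂) - Real.exp (a * w₁)
          = Real.exp (a * w₁) * (Real.exp (a * (w₂ - w₁)) - 1) := by
        rw [mul_sub, ← Real.exp_add]; ring_nf
      rw [e1, e2]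
      have hx1 : Real.exp (b * w₁) ≤ Real.exp (a * w₁) :=
        Real.exp_le_exp.2 (by nlinarith)
      have hy1 : 0 < Real.exp (b * (w₂ - w₁)) - 1 := by
        have : (1:ℝ) < Real.exp (b * (w₂ - w₁)) := by
          rw [← Real.exp_zero]; exact Real.exp_lt_exp.2 (by nlinarith)
        linarith
      have hy2 : Real.exp (b * (w₂ - w₁)) - 1 < Real.exp (a * (w₂ - w₁)) - 1 := by
        have : Real.exp (b * (w₂ - w₁)) < Real.exp (a * (w₂ - w₁)) :=
          Real.exp_lt_exp.2 (by nlinarith)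
        linarith
      calc Real.exp (b * w₁) * (Real.exp (b * (w₂ - w₁)) - 1)
          ≤ Real.exp (a * w₁) * (Real.exp (b * (w₂ - w₁)) - 1) := by
            exact mul_le_mul_of_nonneg_right hx1 hy1.le
        _ < Real.exp (a * w₁) * (Real.exp (a * (w₂ - w₁)) - 1) := by
            exact mul_lt_mul_of_pos_left hy2 (Real.exp_pos _)
    linarith

lemma Dpos {a b : ℝ} (hb : b < a) {w : ℝ} (hw : 0 < w) :
    0 < Real.exp (a * w) - Real.exp (b * w) := by
  have : Real.exp (b * w) < Real.exp (a * w) := Real.exp_lt_exp.2 (by nlinarith)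
  linarith

section F
variable {α ρ γ σ : ℝ} (hρ0 : 0 < ρ) (hρα : -α < ρ) (hγ : 0 < γ) (hγσ : γ < σ) (hσ : σ ≤ 1)
include hρ0 hρα

omit hρα in lemma Ffun_pos {u : ℝ} (hu : 0 < u) : 0 < Ffun α ρ γ σ u := by
  unfold Ffun
  rw [csch_div_exp]
  have hw : 0 < u ^ γ := Real.rpow_pos_of_pos hu γ
  have hD := Dpos (show α - ρ < ρ + α by linarith) hw
  positivity

include hγ hσ in
lemma Ffun_anti {u v : ℝ} (hu : 0 < u) (huv : u < v) :
    Ffun α ρ γ σ v < Ffun α ρ γ σ u := by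
  unfold Ffun
  rw [csch_div_exp, csch_div_exp]
  have hwu : 0 < u ^ γ := Real.rpow_pos_of_pos hu γ
  have hv : 0 < v := hu.trans huv
  have hwv : 0 < v ^ γ := Real.rpow_pos_of_pos hv γ
  have hab : (α - ρ) < (ρ + α) := by linarith
  have hwuv : u ^ γ < v ^ γ := Real.rpow_lt_rpow hu.le huv hγ
  have hDu := Dpos hab hwu
  have hDv := Dpos hab hwv
  have hDm := Dmono hab (by linarith) hwu.le hwuv
  have h1 : 2 / (Real.exp ((ρ + α) * v ^ γ) - Real.exp ((α - ρ) * v ^ γ))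
      < 2 / (Real.exp ((ρ + α) * u ^ γ) - Real.exp ((α - ρ) * u ^ γ)) := by
    apply div_lt_div_of_pos_left (by norm_num) hDu hDm
  have h2 : v ^ (σ - 1) ≤ u ^ (σ - 1) :=
    Real.rpow_le_rpow_of_nonpos hu huv.le (by linarith)
  have hvp : 0 < v ^ (σ - 1) := Real.rpow_pos_of_pos hv _
  calc 2 / (Real.exp ((ρ + α) * v ^ γ) - Real.exp ((α - ρ) * v ^ γ)) * v ^ (σ - 1)
      < 2 / (Real.exp ((ρ + α) * u ^ γ) - Real.exp ((α - ρ) * u ^ γ)) * v ^ (σ - 1) :=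
        mul_lt_mul_of_pos_right h1 hvp
    _ ≤ 2 / (Real.exp ((ρ + α) * u ^ γ) - Real.exp ((α - ρ) * u ^ γ)) * u ^ (σ - 1) :=
        mul_le_mul_of_nonneg_left h2 (by positivity)

end F

section FI
variable {α ρ γ σ : ℝ} (hρ0 : 0 < ρ) (hρα : -α < ρ) (hγ : 0 < γ) (hγσ : γ < σ) (hσ : σ ≤ 1)
include hρ0 hρα hγ hγσ hσ

lemma Ffun_integrable : IntegrableOn (Ffun α ρ γ σ) (Ioi 0) := by
  have ha : 0 < ρ + α := by linarith
  have hmeas : Measurable (Ffun α ρ γ σ) := by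
    unfold Ffun csch
    have hm : Measurable fun u : ℝ => u ^ γ := measurable_id.pow_const γ
    apply Measurable.mul
    · apply Measurable.div
      · apply Measurable.div measurable_const
        apply Measurable.sub
        · exact Real.measurable_exp.comp (hm.const_mul ρ)
        · exact Real.measurable_exp.comp ((hm.const_mul ρ).neg)
      · exact Real.measurable_exp.comp (hm.const_mul α)
    · exact measurable_id.pow_const (σ - 1)
  have hint1 : IntegrableOn (fun u : ℝ => u ^ (σ - 1) * Real.exp (-(ρ + α) * u ^ γ)) (Ioi 0) :=
    aux_int_s14 (by linarith) hγ ha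
  have hint2 : IntegrableOn (fun u : ℝ => u ^ (σ - 1 - γ) * Real.exp (-(ρ + α) * u ^ γ)) (Ioi 0) :=
    aux_int_s14 (by linarith) hγ ha
  have hg : IntegrableOn (fun u : ℝ => 2 * (u ^ (σ - 1) * Real.exp (-(ρ + α) * u ^ γ))
      + (1/ρ) * (u ^ (σ - 1 - γ) * Real.exp (-(ρ + α) * u ^ γ))) (Ioi 0) :=
    (hint1.const_mul 2).add (hint2.const_mul (1/ρ))
  apply hg.mono' (hmeas.aestronglyMeasurable.restrict)
  rw [ae_restrict_iff' measurableSet_Ioi]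
  filter_upwards with u
  intro hu
  have hu' : (0:ℝ) < u := hu
  have hw : 0 < u ^ γ := Real.rpow_pos_of_pos hu' γ
  set w := u ^ γ with hwdef
  set t := 2 * ρ * w with ht
  have htpos : 0 < t := by positivity
  have hD := Dpos (show α - ρ < ρ + α by linarith) hw
  have hBA : Real.exp ((α - ρ) * w) = Real.exp ((ρ + α) * w) * Real.exp (-t) := by
    rw [← Real.exp_add]; congr 1; rw [ht]; ring
  have hEA : Real.exp (-((ρ + α) * w)) * Real.exp ((ρ + α) * w) = 1 := by
    rw [← Real.exp_add]; simp
  have h1 : (t + 1) * Real.exp (-t) ≤ 1 := by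
    calc (t + 1) * Real.exp (-t) ≤ Real.exp t * Real.exp (-t) :=
          mul_le_mul_of_nonneg_right (by linarith [Real.add_one_le_exp t]) (Real.exp_pos _).le
      _ = 1 := by rw [← Real.exp_add]; simp
  have hq : (1/ρ) * w⁻¹ = 2 / t := by rw [ht]; field_simp
  have hkey : 2 ≤ (2 + (1/ρ) * w⁻¹) * (1 - Real.exp (-t)) := by
    rw [hq, show (2:ℝ) + 2/t = (2*t + 2)/t by field_simp, div_mul_eq_mul_div,
      le_div_iff₀ htpos]
    nlinarith [Real.exp_pos (-t)]
  have hEAB : Real.exp (-((ρ + α) * w)) * (Real.exp ((ρ + α) * w) - Real.exp ((α - ρ) * w))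
      = 1 - Real.exp (-t) := by
    rw [hBA, mul_sub, ← mul_assoc, hEA, one_mul]
  have hcsch : csch (ρ * w) / Real.exp (α * w)
      ≤ (2 + (1/ρ) * w⁻¹) * Real.exp (-((ρ + α) * w)) := by
    rw [csch_div_exp, div_le_iff₀ hD, mul_assoc, hEAB]
    exact hkey
  have hpow : u ^ (σ - 1) * w⁻¹ = u ^ (σ - 1 - γ) := by
    rw [hwdef, ← Real.rpow_neg hu'.le, ← Real.rpow_add hu']; ring_nf
  have hFpos : 0 < Ffun α ρ γ σ u := Ffun_pos hρ0 hu'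
  rw [Real.norm_of_nonneg hFpos.le]
  have hup : 0 < u ^ (σ - 1) := Real.rpow_pos_of_pos hu' _
  have step : Ffun α ρ γ σ u ≤ (2 + (1/ρ) * w⁻¹) * Real.exp (-((ρ + α) * w)) * u ^ (σ - 1) := by
    unfold Ffun
    exact mul_le_mul_of_nonneg_right hcsch hup.le
  have heq : (2 + (1/ρ) * w⁻¹) * Real.exp (-((ρ + α) * w)) * u ^ (σ - 1)
      = 2 * (u ^ (σ - 1) * Real.exp (-(ρ + α) * w))
        + (1/ρ) * (u ^ (σ - 1 - γ) * Real.exp (-(ρ + α) * w)) := by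
    rw [← hpow, show -(ρ + α) * w = -((ρ + α) * w) by ring]; ring
  rw [heq] at step
  exact step

end FI

section Interval
variable {f : ℝ → ℝ} (hanti : ∀ u v : ℝ, 0 < u → u < v → f v < f u)
  (hpos : ∀ u : ℝ, 0 < u → 0 < f u)
  (hint : IntegrableOn f (Ioi 0))

include hanti hint in
lemma int_le_left {a b : ℝ} (ha : 0 < a) (hab : a ≤ b) :
    ∫ u in Ioc a b, f u ≤ f a * (b - a) := by
  have hsub : Ioc a b ⊆ Ioi 0 := fun u hu => lt_of_lt_of_le ha (le_of_lt hu.1) |>.trans_le le_rfl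
  have h1 : ∫ u in Ioc a b, f u ≤ ∫ _u in Ioc a b, f a := by
    apply setIntegral_mono_on (hint.mono_set hsub) (integrableOn_const (by
      rw [Real.volume_Ioc]; exact ENNReal.ofReal_ne_top)) measurableSet_Ioc
    intro u hu
    exact (hanti a u ha hu.1).le
  calc ∫ u in Ioc a b, f u ≤ ∫ _u in Ioc a b, f a := h1
    _ = f a * (b - a) := by
        rw [setIntegral_const, Real.volume_real_Ioc_of_le hab, smul_eq_mul, mul_comm]

include hanti hint in
lemma int_ge_right {a b : ℝ} (ha : 0 < a) (hab : a ≤ b) :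
    f b * (b - a) ≤ ∫ u in Ioc a b, f u := by
  have hsub : Ioc a b ⊆ Ioi 0 := fun u hu => lt_trans ha hu.1
  have h1 : ∫ _u in Ioc a b, f b ≤ ∫ u in Ioc a b, f u := by
    apply setIntegral_mono_on (integrableOn_const (by
      rw [Real.volume_Ioc]; exact ENNReal.ofReal_ne_top)) (hint.mono_set hsub) measurableSet_Ioc
    intro u hu
    rcases eq_or_lt_of_le hu.2 with h | h
    · rw [h]
    · exact (hanti u b (lt_trans ha hu.1) h).le
  calc f b * (b - a)
      = ∫ _u in Ioc a b, f b := by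
        rw [setIntegral_const, Real.volume_real_Ioc_of_le hab, smul_eq_mul, mul_comm]
    _ ≤ ∫ u in Ioc a b, f u := h1

include hanti hint in
lemma int_lt_left {a b : ℝ} (ha : 0 < a) (hab : a < b) :
    ∫ u in Ioc a b, f u < f a * (b - a) := by
  set m := (a + b) / 2 with hm
  have ham : a < m := by rw [hm]; linarith
  have hmb : m < b := by rw [hm]; linarith
  have hsplit : ∫ u in Ioc a b, f u = (∫ u in Ioc a m, f u) + ∫ u in Ioc m b, f u := by
    rw [← Ioc_union_Ioc_eq_Ioc ham.le hmb.le,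
      setIntegral_union (Ioc_disjoint_Ioc_of_le le_rfl) measurableSet_Ioc
        (hint.mono_set (fun u hu => lt_trans ha hu.1))
        (hint.mono_set (fun u hu => lt_trans (lt_trans ha ham) hu.1))]
  rw [hsplit]
  have h1 : ∫ u in Ioc a m, f u ≤ f a * (m - a) := int_le_left hanti hint ha ham.le
  have h2 : ∫ u in Ioc m b, f u ≤ f m * (b - m) := int_le_left hanti hint (lt_trans ha ham) hmb.le
  have h3 : f m * (b - m) < f a * (b - m) :=
    mul_lt_mul_of_pos_right (hanti a m ha ham) (by linarith)
  nlinarith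

end Interval

lemma union_Ioc_seq {a : ℕ → ℝ} (hmono : StrictMono a) (htop : Filter.Tendsto a Filter.atTop Filter.atTop) :
    (⋃ n : ℕ, Ioc (a n) (a (n + 1))) = Ioi (a 0) := by
  ext y
  simp only [mem_iUnion, mem_Ioc, mem_Ioi]
  constructor
  · rintro ⟨n, h1, _⟩
    exact lt_of_le_of_lt (hmono.monotone (Nat.zero_le n)) h1
  · intro hy
    have hev : ∃ n, y ≤ a n := by
      rcases (htop.eventually_ge_atTop y).exists with ⟨n, hn⟩
      exact ⟨n, hn⟩
    classical
    let m := Nat.find hev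
    have hm : y ≤ a m := Nat.find_spec hev
    have hm0 : m ≠ 0 := by
      intro h
      rw [h] at hm
      exact absurd hm (not_le.2 hy)
    obtain ⟨p, hp⟩ := Nat.exists_eq_succ_of_ne_zero hm0
    refine ⟨p, ?_, by rw [← Nat.succ_eq_add_one, ← hp]; exact hm⟩
    have := Nat.find_min hev (m := p) (by omega)
    linarith [not_le.1 this]

lemma integral_Ioi_eq_tsum {f : ℝ → ℝ} (hint : IntegrableOn f (Ioi 0))
    {a : ℕ → ℝ} (hmono : StrictMono a) (ha0 : 0 < a 0)
    (htop : Filter.Tendsto a Filter.atTop Filter.atTop) :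
    ∫ u in Ioi (a 0), f u = ∑' n : ℕ, ∫ u in Ioc (a n) (a (n + 1)), f u := by
  have hsub : Ioi (a 0) ⊆ Ioi 0 := fun u hu => lt_trans ha0 hu
  have hd : Pairwise (Function.onFun Disjoint fun n : ℕ => Ioc (a n) (a (n + 1))) := by
    have key : ∀ p q : ℕ, p < q → Disjoint (Ioc (a p) (a (p + 1))) (Ioc (a q) (a (q + 1))) := by
      intro p q hpq
      rw [Set.Ioc_disjoint_Ioc]
      have h1 : a (p + 1) ≤ a q := hmono.monotone (by omega : p + 1 ≤ q)
      exact le_trans (min_le_left _ _) (le_trans h1 (le_max_right _ _))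
    intro m n hmn
    rcases lt_or_gt_of_ne hmn with h | h
    · exact key m n h
    · exact (key n m h).symm
  rw [← union_Ioc_seq hmono htop, integral_iUnion (fun n => measurableSet_Ioc) hd]
  rw [union_Ioc_seq hmono htop]
  exact hint.mono_set hsub

theorem stmt14 (α ρ γ σ β δ : ℝ)
    (hρ : ρ > max 0 (-α)) (hγ : 0 < γ) (hγσ : γ < σ) (hσ : σ ≤ 1)
    (hδ : δ = 1 ∨ δ = -1)
    (ν : ℕ → ℝ) (hν : ∀ n ≥ 1, 0 < ν n)
    (hdec : ∀ m n, 1 ≤ m → m ≤ n → ν n ≤ ν m)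
    (V : ℕ → ℝ) (hV : ∀ n, V n = ∑ j ∈ Finset.Icc 1 n, ν j)
    (hVinf : Filter.Tendsto V Filter.atTop Filter.atTop)
    (hβ : β ≤ ν 1 / 2)
    (μ : ℝ → ℝ) (hμ : ∀ t > 0, 0 < μ t) (hμc : ContinuousOn μ (Set.Ioi 0))
    (hμint : ∀ x > 0, MeasureTheory.IntegrableOn μ (Set.Ioc 0 x))
    (U : ℝ → ℝ) (hU : ∀ x, U x = ∫ t in Set.Ioc (0 : ℝ) x, μ t)
    (x : ℝ) (hx : 0 < x)
    (k θ : ℝ)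
    (hk : k = ∫ u in Set.Ioi (0 : ℝ), csch (ρ * u ^ γ) / Real.exp (α * u ^ γ) * u ^ (σ - 1))
    (hθ : θ = (1 / k) * ∫ u in Set.Ioc (0 : ℝ) (U x ^ δ * (ν 1 - β)),
        csch (ρ * u ^ γ) / Real.exp (α * u ^ γ) * u ^ (σ - 1)) :
    (∑' n : ℕ,
        csch (ρ * U x ^ (δ * γ) * (V (n + 1) - β) ^ γ) /
            Real.exp (α * U x ^ (δ * γ) * (V (n + 1) - β) ^ γ) *
          (U x ^ (δ * σ) * ν (n + 2) / (V (n + 1) - β) ^ (1 - σ))) > k * (1 - θ) ∧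
    0 < θ ∧ θ < 1 := by
  obtain ⟨hρ0, hρα⟩ := max_lt_iff.mp hρ
  set F : ℝ → ℝ := Ffun α ρ γ σ with hFdef
  have hFanti' : ∀ u v : ℝ, 0 < u → u < v → F v < F u :=
    fun u v hu huv => Ffun_anti hρ0 hρα hγ hσ hu huv
  have hFpos' : ∀ u : ℝ, 0 < u → 0 < F u := fun u hu => Ffun_pos hρ0 hu
  have hFint : IntegrableOn F (Ioi 0) := Ffun_integrable hρ0 hρα hγ hγσ hσ
  -- U x is positive
  have hUx : 0 < U x := by
    rw [hU x]
    have hii : IntervalIntegrable μ volume 0 x := by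
      rw [intervalIntegrable_iff_integrableOn_Ioc_of_le hx.le]
      exact hμint x hx
    have := intervalIntegral.intervalIntegral_pos_of_pos_on hii
      (fun t ht => hμ t ht.1) hx
    rwa [intervalIntegral.integral_of_le hx.le] at this
  set c := U x ^ δ with hcdef
  have hc : 0 < c := Real.rpow_pos_of_pos hUx δ
  have hδγ : U x ^ (δ * γ) = c ^ γ := Real.rpow_mul hUx.le δ γ
  have hδσ : U x ^ (δ * σ) = c ^ σ := Real.rpow_mul hUx.le δ σ
  -- V facts
  have hν1 : 0 < ν 1 := hν 1 le_rfl
  have hV1 : V 1 = ν 1 := by rw [hV]; simp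
  have hVsucc : ∀ n : ℕ, V (n + 1) = V n + ν (n + 1) := by
    intro n
    rw [hV, hV, Finset.sum_Icc_succ_top (by omega : 1 ≤ n + 1)]
  have hVlb : ∀ n : ℕ, 1 ≤ n → ν 1 ≤ V n := by
    intro n hn
    rw [hV]
    exact Finset.single_le_sum (f := ν)
      (fun j hj => (hν j (Finset.mem_Icc.mp hj).1).le)
      (Finset.mem_Icc.mpr ⟨le_rfl, hn⟩)
  have htn : ∀ n : ℕ, 1 ≤ n → 0 < V n - β := by
    intro n hn
    have := hVlb n hn
    linarith
  -- the sequence of partition points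
  set a : ℕ → ℝ := fun n => c * (V (n + 1) - β) with hadef
  have hamono : StrictMono a := by
    apply strictMono_nat_of_lt_succ
    intro n
    have h1 : V (n + 1) < V (n + 2) := by
      have := hVsucc (n + 1)
      have := hν (n + 2) (by omega)
      linarith
    exact mul_lt_mul_of_pos_left (by linarith) hc
  have hadiff : ∀ n : ℕ, a (n + 1) - a n = c * ν (n + 2) := by
    intro n
    simp only [hadef]
    rw [hVsucc (n + 1)]
    ring
  have ha0 : a 0 = c * (ν 1 - β) := by simp only [hadef]; rw [hV1]
  have hanpos : ∀ n : ℕ, 0 < a n := fun n => mul_pos hc (htn (n + 1) (by omega))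
  have ha0pos : 0 < a 0 := hanpos 0
  have hatop : Filter.Tendsto a Filter.atTop Filter.atTop := by
    apply Filter.Tendsto.const_mul_atTop hc
    have h1 : Filter.Tendsto (fun n : ℕ => V (n + 1)) Filter.atTop Filter.atTop :=
      hVinf.comp (Filter.tendsto_add_atTop_nat 1)
    simpa [sub_eq_add_neg] using Filter.tendsto_atTop_add_const_right _ (-β) h1
  -- rewriting the terms of the series
  have hterm : ∀ n : ℕ,
      csch (ρ * U x ^ (δ * γ) * (V (n + 1) - β) ^ γ) /
            Real.exp (α * U x ^ (δ * γ) * (V (n + 1) - β) ^ γ) *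
          (U x ^ (δ * σ) * ν (n + 2) / (V (n + 1) - β) ^ (1 - σ))
        = F (a n) * (c * ν (n + 2)) := by
    intro n
    have ht : 0 < V (n + 1) - β := htn (n + 1) (by omega)
    set t := V (n + 1) - β with htdef
    have hargρ : ρ * (c * t) ^ γ = ρ * U x ^ (δ * γ) * t ^ γ := by
      rw [Real.mul_rpow hc.le ht.le, hδγ, mul_assoc]
    have hargα : α * (c * t) ^ γ = α * U x ^ (δ * γ) * t ^ γ := by
      rw [Real.mul_rpow hc.le ht.le, hδγ, mul_assoc]
    have h2 : (c * t) ^ (σ - 1) = c ^ (σ - 1) * t ^ (σ - 1) := Real.mul_rpow hc.le ht.le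
    have h3 : t ^ (σ - 1) = (t ^ (1 - σ))⁻¹ := by
      rw [show σ - 1 = -(1 - σ) by ring, Real.rpow_neg ht.le]
    have h4 : c ^ σ = c ^ (σ - 1) * c := by
      rw [← Real.rpow_add_one hc.ne' (σ - 1), sub_add_cancel]
    show _ = Ffun α ρ γ σ (c * t) * (c * ν (n + 2))
    unfold Ffun
    rw [hargρ, hargα, h2, h3, hδσ, h4]
    field_simp
  rw [tsum_congr hterm]
  -- the pieces
  set I : ℕ → ℝ := fun n => ∫ u in Ioc (a n) (a (n + 1)), F u with hIdef
  set term : ℕ → ℝ := fun n => F (a n) * (c * ν (n + 2)) with htermdef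
  have hIle : ∀ n : ℕ, I n ≤ term n := by
    intro n
    have h := int_le_left hFanti' hFint (hanpos n) (hamono (by omega : n < n + 1)).le
    rw [show a (n + 1) - a n = c * ν (n + 2) from hadiff n] at h
    exact h
  have hI0lt : I 0 < term 0 := by
    have h := int_lt_left hFanti' hFint (hanpos 0) (hamono (by omega : 0 < 1))
    rw [show a 1 - a 0 = c * ν 2 from hadiff 0] at h
    exact h
  have hIsum : ∫ u in Ioi (a 0), F u = ∑' n : ℕ, I n :=
    integral_Ioi_eq_tsum hFint hamono ha0pos hatop
  have hInonneg : ∀ n : ℕ, 0 ≤ I n := by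
    intro n
    apply setIntegral_nonneg measurableSet_Ioc
    intro u hu
    exact (hFpos' u (lt_trans (hanpos n) hu.1)).le
  have hIsummable : Summable I := by
    have hd : Pairwise (Function.onFun Disjoint fun n : ℕ => Ioc (a n) (a (n + 1))) := by
      have key : ∀ p q : ℕ, p < q → Disjoint (Ioc (a p) (a (p + 1))) (Ioc (a q) (a (q + 1))) := by
        intro p q hpq
        rw [Set.Ioc_disjoint_Ioc]
        have h1 : a (p + 1) ≤ a q := hamono.monotone (by omega : p + 1 ≤ q)
        exact le_trans (min_le_left _ _) (le_trans h1 (le_max_right _ _))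
      intro m n hmn
      rcases lt_or_gt_of_ne hmn with h | h
      · exact key m n h
      · exact (key n m h).symm
    have := hasSum_integral_iUnion (μ := volume) (f := F)
      (s := fun n : ℕ => Ioc (a n) (a (n + 1))) (fun n => measurableSet_Ioc) hd
      (by rw [union_Ioc_seq hamono hatop]
          exact hFint.mono_set (fun u hu => lt_trans ha0pos hu))
    exact this.summable
  have htermpos : ∀ n : ℕ, 0 < term n := by
    intro n
    exact mul_pos (hFpos' _ (hanpos n)) (mul_pos hc (hν (n + 2) (by omega)))
  have htermle : ∀ n : ℕ, term (n + 1) ≤ I n := by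
    intro n
    have hνle : ν (n + 3) ≤ ν (n + 2) := hdec (n + 2) (n + 3) (by omega) (by omega)
    have h1 : term (n + 1) ≤ F (a (n + 1)) * (c * ν (n + 2)) := by
      simp only [htermdef]
      apply mul_le_mul_of_nonneg_left _ (hFpos' _ (hanpos (n + 1))).le
      · exact mul_le_mul_of_nonneg_left hνle hc.le
    have h2 : F (a (n + 1)) * (c * ν (n + 2)) ≤ I n := by
      have h := int_ge_right hFanti' hFint (hanpos n) (hamono (by omega : n < n + 1)).le
      rw [show a (n + 1) - a n = c * ν (n + 2) from hadiff n] at h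
      exact h
    linarith
  have htermsummable : Summable term := by
    rw [← summable_nat_add_iff 1]
    exact Summable.of_nonneg_of_le (fun n => (htermpos (n + 1)).le) htermle hIsummable
  -- sum > integral over Ioi (a 0)
  have hsumgt : ∑' n : ℕ, term n > ∫ u in Ioi (a 0), F u := by
    rw [hIsum, Summable.tsum_eq_zero_add htermsummable, Summable.tsum_eq_zero_add hIsummable]
    have h1 : ∑' n : ℕ, I (n + 1) ≤ ∑' n : ℕ, term (n + 1) := by
      apply Summable.tsum_le_tsum (fun n => hIle (n + 1))
        ((summable_nat_add_iff 1).mpr hIsummable) ((summable_nat_add_iff 1).mpr htermsummable)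
    linarith
  -- k and θ
  have hkF : k = ∫ u in Ioi 0, F u := hk
  have hθF : θ = 1 / k * ∫ u in Ioc 0 (c * (ν 1 - β)), F u := hθ
  have hIθ : k = (∫ u in Ioc 0 (a 0), F u) + ∫ u in Ioi (a 0), F u := by
    rw [hkF, ← Ioc_union_Ioi_eq_Ioi ha0pos.le,
      setIntegral_union Ioc_disjoint_Ioi_same measurableSet_Ioi
        (hFint.mono_set (fun u hu => hu.1))
        (hFint.mono_set (fun u hu => lt_trans ha0pos hu))]
  have hIθpos : 0 < ∫ u in Ioc 0 (a 0), F u := by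
    have hsplit : ∫ u in Ioc 0 (a 0), F u
        = (∫ u in Ioc 0 (a 0 / 2), F u) + ∫ u in Ioc (a 0 / 2) (a 0), F u := by
      rw [← Ioc_union_Ioc_eq_Ioc (by linarith : (0:ℝ) ≤ a 0 / 2) (by linarith : a 0 / 2 ≤ a 0),
        setIntegral_union (Ioc_disjoint_Ioc_of_le le_rfl) measurableSet_Ioc
          (hFint.mono_set (fun u hu => hu.1))
          (hFint.mono_set (fun u hu => lt_trans (by linarith) hu.1))]
    rw [hsplit]
    have h1 : 0 ≤ ∫ u in Ioc 0 (a 0 / 2), F u :=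
      setIntegral_nonneg measurableSet_Ioc (fun u hu => (hFpos' u hu.1).le)
    have h2 : 0 < ∫ u in Ioc (a 0 / 2) (a 0), F u := by
      have h := int_ge_right hFanti' hFint (by linarith : 0 < a 0 / 2)
        (by linarith : a 0 / 2 ≤ a 0)
      have := hFpos' (a 0) ha0pos
      nlinarith
    linarith
  have hJpos : 0 < ∫ u in Ioi (a 0), F u := by
    rw [hIsum]
    have hI0pos : 0 < I 0 := by
      have h := int_ge_right hFanti' hFint (hanpos 0) (hamono (by omega : 0 < 1)).le
      have h2 : 0 < a 1 - a 0 := by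
        have := hamono (show 0 < 1 by omega)
        linarith
      have := hFpos' (a 1) (hanpos 1)
      nlinarith
    have := Summable.le_tsum hIsummable 0 (fun j _ => hInonneg j)
    linarith
  have hkpos : 0 < k := by rw [hIθ]; linarith
  have hθeq : θ = (∫ u in Ioc 0 (a 0), F u) / k := by
    rw [hθF, ← ha0, one_div, inv_mul_eq_div]
  have hθpos : 0 < θ := by rw [hθeq]; positivity
  have hθlt : θ < 1 := by
    rw [hθeq, div_lt_one hkpos]
    linarith [hIθ, hJpos]
  refine ⟨?_, hθpos, hθlt⟩
  have hkθ : k * (1 - θ) = ∫ u in Ioi (a 0), F u := by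
    rw [hθeq]
    field_simp
    linarith [hIθ]
  rw [hkθ]
  exact hsumgt
end
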